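/- arXiv:2311.02677 — 9 statements merged into one kernel-verified Lean document; each statement's English description precedes it below -/
import Mathlib

section
/- Let A be an n×n Hermitian matrix with eigenvalues λ_1,...,λ_n (counted with multiplicity) and an orthonormal basis of corresponding eigenvectors v_1,...,v_n. Let M_1 = A(2:n,2:n) be the submatrix obtained by deleting the first row and first column of A. Then for every i, |(v_i)_1|^2 · p_A'(λ_i) = p_{M_1}(λ_i), where p_A and p_{M_1} are the characteristic polynomials of A and M_1 respectively, and (v_i)_1 denotes the first component of v_i. -/
open Polynomial Matrix

theorem stmt2 (n : ℕ) (A : Matrix (Fin (n + 1)) (Fin (n + 1)) ℂ)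
    (hA : A.IsHermitian)
    (μ : Fin (n + 1) → ℂ) (v : Fin (n + 1) → Fin (n + 1) → ℂ)
    (heig : ∀ i, A.mulVec (v i) = μ i • v i)
    (horth : ∀ i j, star (v i) ⬝ᵥ v j = if i = j then 1 else 0) :
    ∀ i, (‖v i 0‖ ^ 2 : ℂ) * (derivative A.charpoly).eval (μ i) =
      ((A.submatrix Fin.succ Fin.succ).charpoly).eval (μ i) := by
  classical
  intro i
  set U : Matrix (Fin (n + 1)) (Fin (n + 1)) ℂ := Matrix.of fun j k => v k j with hUdef
  have hUstar : star U * U = 1 := by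
    ext a b
    have := horth a b
    simp only [Matrix.mul_apply, Matrix.star_apply, hUdef, Matrix.of_apply,
      Matrix.one_apply]
    simpa [dotProduct] using this
  have hUU : U * star U = 1 := mul_eq_one_comm.mp hUstar
  set D : Matrix (Fin (n + 1)) (Fin (n + 1)) ℂ := Matrix.diagonal μ with hDdef
  have hAU : A * U = U * D := by
    ext j k
    have h1 : (A * U) j k = A.mulVec (v k) j := by
      simp [Matrix.mul_apply, Matrix.mulVec, dotProduct, hUdef]
    rw [h1, heig k]
    simp [hUdef, hDdef, Matrix.mul_diagonal, mul_comm]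
  have hA' : A = U * D * star U := by
    calc A = A * (U * star U) := by rw [hUU, Matrix.mul_one]
    _ = (A * U) * star U := by rw [Matrix.mul_assoc]
    _ = U * D * star U := by rw [hAU]
  -- move to polynomial matrices
  set F : Matrix (Fin (n + 1)) (Fin (n + 1)) ℂ →+* Matrix (Fin (n + 1)) (Fin (n + 1)) ℂ[X] :=
    (C : ℂ →+* ℂ[X]).mapMatrix with hFdef
  have hFU : F U * F (star U) = 1 := by rw [← RingHom.map_mul, hUU, RingHom.map_one]
  have hFU' : F (star U) * F U = 1 := by rw [← RingHom.map_mul, hUstar, RingHom.map_one]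
  have hscal : (Matrix.scalar (Fin (n + 1)) (X : ℂ[X])) =
      (X : ℂ[X]) • (1 : Matrix (Fin (n + 1)) (Fin (n + 1)) ℂ[X]) := by
    ext a b
    by_cases h : a = b <;> simp [h, Matrix.one_apply]
  have hFA : F A = F U * F D * F (star U) := by
    rw [hA', RingHom.map_mul, RingHom.map_mul]
  have hchar : charmatrix A = F U * charmatrix D * F (star U) := by
    have h1 : charmatrix A = (X : ℂ[X]) • 1 - F A := by
      simp only [charmatrix, hscal, hFdef]
    have h2 : charmatrix D = (X : ℂ[X]) • 1 - F D := by
      simp only [charmatrix, hscal, hFdef]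
    rw [h1, h2, hFA, Matrix.mul_sub, Matrix.sub_mul, Matrix.mul_smul, Matrix.mul_one,
      Matrix.smul_mul, hFU]
  have hcharD : charmatrix D = Matrix.diagonal (fun k => (X : ℂ[X]) - C (μ k)) := by
    ext a b
    by_cases h : a = b
    · subst h; simp [hDdef]
    · simp [h, hDdef, Matrix.diagonal_apply_ne _ h]
  -- charpoly A as a product
  have hdet1 : det (F U) * det (F (star U)) = 1 := by
    rw [← det_mul, hFU, det_one]
  have hcharpoly : A.charpoly = ∏ k : Fin (n + 1), ((X : ℂ[X]) - C (μ k)) := by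
    rw [Matrix.charpoly, hchar, det_mul, det_mul, mul_right_comm, hdet1, one_mul,
      hcharD, det_diagonal]
  -- adjugate identity
  have hadjFU : adjugate (F U) = det (F U) • F (star U) := by
    have h := Matrix.mul_adjugate (F U)
    calc adjugate (F U) = (F (star U) * F U) * adjugate (F U) := by rw [hFU', Matrix.one_mul]
    _ = F (star U) * (F U * adjugate (F U)) := by rw [Matrix.mul_assoc]
    _ = det (F U) • F (star U) := by rw [h, Matrix.mul_smul, Matrix.mul_one]
  have hadjFU' : adjugate (F (star U)) = det (F (star U)) • F U := by
    have h := Matrix.mul_adjugate (F (star U))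
    calc adjugate (F (star U)) = (F U * F (star U)) * adjugate (F (star U)) := by
          rw [hFU, Matrix.one_mul]
    _ = F U * (F (star U) * adjugate (F (star U))) := by rw [Matrix.mul_assoc]
    _ = det (F (star U)) • F U := by rw [h, Matrix.mul_smul, Matrix.mul_one]
  have hadj : adjugate (charmatrix A) = F U * adjugate (charmatrix D) * F (star U) := by
    rw [hchar, Matrix.adjugate_mul_distrib, Matrix.adjugate_mul_distrib, hadjFU, hadjFU']
    simp only [Matrix.smul_mul, Matrix.mul_smul, smul_smul, Matrix.mul_assoc]
    rw [hdet1, one_smul]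
  -- submatrix charpoly = adjugate entry
  have hsubchar : charmatrix (A.submatrix Fin.succ Fin.succ) =
      (charmatrix A).submatrix Fin.succ Fin.succ := by
    ext a b
    by_cases h : a = b
    · subst h; simp
    · have h' : Fin.succ a ≠ Fin.succ b := fun hc => h (Fin.succ_injective _ hc)
      simp [h, h']
  have hsub : (A.submatrix Fin.succ Fin.succ).charpoly = adjugate (charmatrix A) 0 0 := by
    rw [Matrix.adjugate_fin_succ_eq_det_submatrix]
    simp only [Fin.succAbove_zero, Fin.val_zero, add_zero, pow_zero, one_mul]
    rw [Matrix.charpoly, hsubchar]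
  -- explicit formula for the adjugate entry
  have hadjD : adjugate (charmatrix D) =
      Matrix.diagonal (fun k => ∏ j ∈ Finset.univ.erase k, ((X : ℂ[X]) - C (μ j))) := by
    rw [hcharD, Matrix.adjugate_diagonal]
  have hentry : adjugate (charmatrix A) 0 0 =
      ∑ k : Fin (n + 1), (C (v k 0) * C ((starRingEnd ℂ) (v k 0))) *
        ∏ j ∈ Finset.univ.erase k, ((X : ℂ[X]) - C (μ j)) := by
    rw [hadj, hadjD]
    rw [Matrix.mul_apply]
    refine Finset.sum_congr rfl fun k _ => ?_
    rw [Matrix.mul_diagonal]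
    simp only [hFdef, RingHom.mapMatrix_apply, Matrix.map_apply, hUdef, Matrix.of_apply,
      Matrix.star_apply, RCLike.star_def]
    ring
  -- evaluate everything at μ i
  have hzero : ∀ k, k ≠ i → (∏ j ∈ Finset.univ.erase k, (μ i - μ j)) = 0 := by
    intro k hk
    exact Finset.prod_eq_zero (Finset.mem_erase.mpr ⟨Ne.symm hk, Finset.mem_univ i⟩) (sub_self _)
  have hevalsub : ((A.submatrix Fin.succ Fin.succ).charpoly).eval (μ i) =
      (v i 0 * (starRingEnd ℂ) (v i 0)) * ∏ j ∈ Finset.univ.erase i, (μ i - μ j) := by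
    rw [hsub, hentry]
    rw [eval_finset_sum]
    rw [Finset.sum_eq_single_of_mem i (Finset.mem_univ i)]
    · simp [eval_prod]
    · intro k _ hk
      simp [eval_prod, hzero k hk]
  have hevalder : (derivative A.charpoly).eval (μ i) =
      ∏ j ∈ Finset.univ.erase i, (μ i - μ j) := by
    have hmem : μ i ∈ Multiset.map μ Finset.univ.val :=
      Multiset.mem_map_of_mem μ (Finset.mem_univ i)
    have h1 : A.charpoly =
        (Multiset.map (fun a => (X : ℂ[X]) - C a) (Multiset.map μ Finset.univ.val)).prod := by
      rw [hcharpoly, Finset.prod, Multiset.map_map]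
      rfl
    rw [h1, eval_multiset_prod_X_sub_C_derivative hmem,
      ← Multiset.map_erase_of_mem μ _ (Finset.mem_univ i), Multiset.map_map]
    rfl
  rw [hevalder, hevalsub]
  have hnorm : (‖v i 0‖ ^ 2 : ℂ) = v i 0 * (starRingEnd ℂ) (v i 0) := by
    rw [Complex.mul_conj]
    norm_cast
    simp [Complex.normSq_eq_norm_sq]
  rw [hnorm]
end

section
/- Let T be an n×n real symmetric tridiagonal matrix, let W be orthogonal with W^T T W = diag(λ_1,...,λ_n), and suppose every entry of the first row of W equals 1/√n. If M_1 = T(2:n,2:n) denotes T with first row and column deleted, then p_{M_1}(x) = (1/n) p_T'(x) for all real x. -/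
open Polynomial Matrix

private lemma deriv_prod' {m : ℕ} (f : Fin m → ℝ[X]) :
    derivative (∏ i, f i) =
      ∑ i, (∏ j ∈ Finset.univ.erase i, f j) * derivative (f i) := by
  classical
  rw [Finset.prod_eq_multiset_prod, Polynomial.derivative_prod,
    Finset.sum_eq_multiset_sum]
  exact congrArg Multiset.sum (Multiset.map_congr rfl fun j _ => by
    rw [← Finset.erase_val, ← Finset.prod_eq_multiset_prod])

theorem stmt4 (n : ℕ) (T W : Matrix (Fin (n + 1)) (Fin (n + 1)) ℝ)
    (hTsymm : T.IsSymm)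
    (hTtri : ∀ i j : Fin (n + 1), (i : ℕ) + 2 ≤ (j : ℕ) → T i j = 0)
    (lam : Fin (n + 1) → ℝ) (hdist : Function.Injective lam)
    (hW : Wᵀ * W = 1) (hTW : Wᵀ * T * W = Matrix.diagonal lam)
    (hrow : ∀ j, W 0 j = 1 / Real.sqrt (n + 1)) :
    (T.submatrix Fin.succ Fin.succ).charpoly =
      ((n + 1 : ℝ))⁻¹ • derivative T.charpoly := by
  classical
  have hW' : W * Wᵀ = 1 := mul_eq_one_comm.mp hW
  have hT : T = W * Matrix.diagonal lam * Wᵀ := by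
    rw [← hTW]
    calc T = (W * Wᵀ) * T * (W * Wᵀ) := by rw [hW']; simp [Matrix.mul_assoc]
    _ = W * (Wᵀ * T * W) * Wᵀ := by simp only [Matrix.mul_assoc]
  -- polynomial matrices
  set Wp : Matrix (Fin (n+1)) (Fin (n+1)) ℝ[X] :=
    (C : ℝ →+* ℝ[X]).mapMatrix W with hWp
  have hWpt : Wpᵀ = (C : ℝ →+* ℝ[X]).mapMatrix Wᵀ := by
    rw [hWp, RingHom.mapMatrix_apply, RingHom.mapMatrix_apply, Matrix.transpose_map]
  have hWpo : Wpᵀ * Wp = 1 := by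
    rw [hWpt, hWp, ← _root_.map_mul, hW, _root_.map_one]
  have hWpo' : Wp * Wpᵀ = 1 := mul_eq_one_comm.mp hWpo
  have hdet : det Wp * det Wp = 1 := by
    have := congrArg det hWpo
    rwa [det_mul, det_transpose, det_one] at this
  -- charmatrix conjugation
  set D : Matrix (Fin (n+1)) (Fin (n+1)) ℝ[X] := Matrix.diagonal fun i => X - C (lam i) with hD
  have hchar : charmatrix T = Wp * D * Wpᵀ := by
    have hD2 : D = Matrix.scalar _ (X : ℝ[X]) -
        (C : ℝ →+* ℝ[X]).mapMatrix (Matrix.diagonal lam) := by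
      refine Matrix.ext fun i j => ?_
      rcases eq_or_ne i j with rfl | hij
      · simp [hD, scalar_apply]
      · simp [hD, scalar_apply, Matrix.diagonal_apply_ne _ hij, hij]
    have hsc : Matrix.scalar (Fin (n+1)) (X : ℝ[X]) = (X : ℝ[X]) • 1 := by
      rw [Matrix.smul_one_eq_diagonal, scalar_apply]
    rw [hD2, Matrix.mul_sub, Matrix.sub_mul, hsc, Matrix.mul_smul, Matrix.mul_one,
      Matrix.smul_mul, hWpo', hT]
    unfold charmatrix
    rw [hsc]
    congr 1
    rw [hWp, hWpt, ← _root_.map_mul, ← _root_.map_mul]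
  -- adjugates
  have hadjW : adjugate Wp = det Wp • Wpᵀ := by
    calc adjugate Wp = adjugate Wp * (Wp * Wpᵀ) := by rw [hWpo', Matrix.mul_one]
    _ = (adjugate Wp * Wp) * Wpᵀ := by rw [Matrix.mul_assoc]
    _ = det Wp • Wpᵀ := by rw [adjugate_mul, Matrix.smul_mul, Matrix.one_mul]
  have hadjWt : adjugate Wpᵀ = det Wp • Wp := by
    calc adjugate Wpᵀ = adjugate Wpᵀ * (Wpᵀ * Wp) := by rw [hWpo, Matrix.mul_one]
    _ = (adjugate Wpᵀ * Wpᵀ) * Wp := by rw [Matrix.mul_assoc]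
    _ = det Wp • Wp := by rw [adjugate_mul, det_transpose, Matrix.smul_mul, Matrix.one_mul]
  have hadj : adjugate (charmatrix T) = Wp * adjugate D * Wpᵀ := by
    rw [hchar, adjugate_mul_distrib, adjugate_mul_distrib, hadjW, hadjWt]
    rw [Matrix.smul_mul, Matrix.mul_smul, Matrix.mul_smul, smul_smul, hdet, one_smul]
    rw [← Matrix.mul_assoc]
  -- charpoly of T
  have hcp : T.charpoly = ∏ i, (X - C (lam i)) := by
    rw [Matrix.charpoly, hchar, det_mul, det_mul, det_transpose, mul_comm (det Wp) (det D),
      mul_assoc, hdet, mul_one, hD, det_diagonal]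
  -- first row squared
  have hsq : ∀ k, W 0 k * W 0 k = ((n : ℝ) + 1)⁻¹ := by
    intro k
    rw [hrow k]
    rw [div_mul_div_comm, one_mul, Real.mul_self_sqrt (by positivity)]
    norm_num
  -- LHS
  have hsub : charmatrix (T.submatrix Fin.succ Fin.succ) =
      (charmatrix T).submatrix Fin.succ Fin.succ := by
    refine Matrix.ext fun i j => ?_
    rcases eq_or_ne i j with rfl | hij
    · simp
    · have h2 : Fin.succ i ≠ Fin.succ j := fun h => hij (Fin.succ_injective _ h)
      simp [hij, h2]
  have hLHS : (T.submatrix Fin.succ Fin.succ).charpoly = adjugate (charmatrix T) 0 0 := by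
    rw [Matrix.charpoly, hsub, adjugate_fin_succ_eq_det_submatrix]
    simp
  rw [hLHS, hadj, hD, adjugate_diagonal]
  rw [hcp, deriv_prod']
  rw [Matrix.mul_apply]
  rw [Finset.smul_sum]
  refine Finset.sum_congr rfl fun k _ => ?_
  rw [Matrix.mul_apply]
  rw [Finset.sum_eq_single k ?_ (by simp)]
  · simp only [hWp, RingHom.mapMatrix_apply, Matrix.map_apply, Matrix.transpose_apply,
      Matrix.diagonal_apply_eq, derivative_sub, derivative_X, derivative_C, sub_zero, mul_one]
    rw [mul_comm (C (W 0 k)) _, mul_assoc, ← _root_.map_mul, hsq k]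
    rw [smul_eq_C_mul, mul_comm]
  · intro b _ hb
    simp [Matrix.diagonal_apply_ne _ hb]
end

section
/- Conversely, let T be an n×n real symmetric tridiagonal unreduced matrix with distinct eigenvalues λ_1,...,λ_n, and suppose that the characteristic polynomial of T(2:n,2:n) equals (1/n) p_T'. If W is orthogonal with W^T T W = diag(λ_1,...,λ_n), then |W(1,j)| = 1/√n for every j. -/
open Polynomial Matrix

private lemma deriv_prod_linear {ι : Type*} [DecidableEq ι] (s : Finset ι) (f : ι → ℝ) :
    derivative (∏ i ∈ s, (X - C (f i))) = ∑ i ∈ s, ∏ k ∈ s.erase i, (X - C (f k)) := by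
  induction s using Finset.induction_on with
  | empty => simp
  | @insert a s ha ih =>
    rw [Finset.prod_insert ha]
    rw [derivative_mul]
    rw [ih]
    rw [Finset.sum_insert ha]
    rw [Finset.erase_insert ha]
    simp only [derivative_sub, derivative_X, derivative_C, sub_zero, one_mul]
    rw [Finset.mul_sum]
    congr 1
    refine Finset.sum_congr rfl fun i hi => ?_
    rw [Finset.erase_insert_of_ne (by rintro rfl; exact ha hi),
      Finset.prod_insert (fun h => ha (Finset.mem_of_mem_erase h))]

private lemma eval_charpoly' {m : Type*} [Fintype m] [DecidableEq m]
    (x : ℝ) (M : Matrix m m ℝ) : (M.charpoly).eval x = det (x • (1 : Matrix m m ℝ) - M) := by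
  rw [Matrix.charpoly, ← Polynomial.coe_evalRingHom, RingHom.map_det]
  congr 1
  ext i k
  by_cases h : i = k
  · subst h
    simp [charmatrix_apply_eq, Matrix.one_apply]
  · simp [charmatrix_apply_ne _ _ _ h, Matrix.one_apply, h]

theorem stmt5 (n : ℕ) (T W : Matrix (Fin (n + 1)) (Fin (n + 1)) ℝ)
    (hTsymm : T.IsSymm)
    (hTtri : ∀ i j : Fin (n + 1), (i : ℕ) + 2 ≤ (j : ℕ) → T i j = 0)
    (hTunred : ∀ i j : Fin (n + 1), (i : ℕ) = (j : ℕ) + 1 → T i j ≠ 0)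
    (lam : Fin (n + 1) → ℝ) (hdist : Function.Injective lam)
    (hchar : (T.submatrix Fin.succ Fin.succ).charpoly =
      ((n + 1 : ℝ))⁻¹ • derivative T.charpoly)
    (hW : Wᵀ * W = 1) (hTW : Wᵀ * T * W = Matrix.diagonal lam) :
    ∀ j, |W 0 j| = 1 / Real.sqrt (n + 1) := by
  classical
  have hWW : W * Wᵀ = 1 := mul_eq_one_comm.mp hW
  have hT : T = W * Matrix.diagonal lam * Wᵀ := by
    calc T = (W * Wᵀ) * T * (W * Wᵀ) := by rw [hWW]; simp
    _ = W * (Wᵀ * T * W) * Wᵀ := by noncomm_ring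
    _ = W * Matrix.diagonal lam * Wᵀ := by rw [hTW]
  have hdet1 : det W * det Wᵀ = 1 := by rw [← det_mul, hWW, det_one]
  -- the conjugated resolvent
  have hconj : ∀ x : ℝ, x • (1 : Matrix (Fin (n+1)) (Fin (n+1)) ℝ) - T
      = W * Matrix.diagonal (fun i => x - lam i) * Wᵀ := by
    intro x
    have h1 : Matrix.diagonal (fun i : Fin (n+1) => x - lam i)
        = x • (1 : Matrix (Fin (n+1)) (Fin (n+1)) ℝ) - Matrix.diagonal lam := by
      ext i k
      rcases eq_or_ne i k with rfl | h
      · simp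
      · simp [Matrix.diagonal_apply_ne _ h, Matrix.one_apply_ne h]
    rw [h1, Matrix.mul_sub, Matrix.sub_mul, ← hT]
    congr 1
    rw [Matrix.mul_smul, Matrix.mul_one, Matrix.smul_mul, hWW]
  have hdetA : ∀ x : ℝ, det (x • (1 : Matrix (Fin (n+1)) (Fin (n+1)) ℝ) - T)
      = ∏ i, (x - lam i) := by
    intro x
    rw [hconj x, det_mul, det_mul, det_diagonal]
    linear_combination (∏ i, (x - lam i)) * hdet1
  -- charpoly of T
  have hcp : T.charpoly = ∏ i, (X - C (lam i)) := by
    apply Polynomial.funext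
    intro x
    rw [eval_charpoly', hdetA]
    simp [eval_prod]
  set c : Fin (n+1) → ℝ := fun i => (W 0 i)^2 with hc
  set q : Fin (n+1) → ℝ[X] := fun i => ∏ k ∈ Finset.univ.erase i, (X - C (lam k)) with hq
  -- key polynomial identity for the (0,0) entry of the adjugate
  have hsub : (T.submatrix Fin.succ Fin.succ).charpoly = ∑ i, C (c i) * q i := by
    apply Polynomial.eq_of_infinite_eval_eq
    apply Set.Infinite.mono (s := (Set.range lam)ᶜ)
    swap
    · exact Set.Finite.infinite_compl (Set.finite_range lam)
    intro x hx
    simp only [Set.mem_compl_iff, Set.mem_range, not_exists] at hx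
    have hx' : ∀ i, x - lam i ≠ 0 := fun i => sub_ne_zero.mpr (fun h => hx i h.symm)
    simp only [Set.mem_setOf_eq]
    set A : Matrix (Fin (n+1)) (Fin (n+1)) ℝ := x • 1 - T with hA
    set B : Matrix (Fin (n+1)) (Fin (n+1)) ℝ
      := W * Matrix.diagonal (fun i => (x - lam i)⁻¹) * Wᵀ with hB
    have hAB : A * B = 1 := by
      rw [hA, hconj x, hB]
      calc W * Matrix.diagonal (fun i => x - lam i) * Wᵀ *
            (W * Matrix.diagonal (fun i => (x - lam i)⁻¹) * Wᵀ)
          = W * (Matrix.diagonal (fun i => x - lam i) * (Wᵀ * W) *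
              Matrix.diagonal (fun i => (x - lam i)⁻¹)) * Wᵀ := by noncomm_ring
        _ = 1 := by
            rw [hW, Matrix.mul_one, Matrix.diagonal_mul_diagonal]
            have : (fun i => (x - lam i) * (x - lam i)⁻¹) = fun _ : Fin (n+1) => (1:ℝ) := by
              funext i; exact mul_inv_cancel₀ (hx' i)
            rw [this, Matrix.diagonal_one, Matrix.mul_one, hWW]
    have hdA : det A = ∏ i, (x - lam i) := hdetA x
    have hdA0 : det A ≠ 0 := by
      rw [hdA]; exact Finset.prod_ne_zero_iff.mpr fun i _ => hx' i
    have hInv : A⁻¹ = B := Matrix.inv_eq_right_inv hAB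
    have hadj : adjugate A = det A • B := by
      rw [← hInv, Matrix.inv_def, Ring.inverse_eq_inv', smul_smul,
        mul_inv_cancel₀ hdA0, one_smul]
    have hminor : det (A.submatrix Fin.succ Fin.succ) = adjugate A 0 0 := by
      rw [Matrix.adjugate_fin_succ_eq_det_submatrix]
      simp
    have hBval : B 0 0 = ∑ i, (x - lam i)⁻¹ * (W 0 i)^2 := by
      rw [hB, Matrix.mul_apply]
      refine Finset.sum_congr rfl fun i _ => ?_
      rw [Matrix.mul_diagonal, Matrix.transpose_apply]
      ring
    have hsubA : A.submatrix Fin.succ Fin.succ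
        = x • (1 : Matrix (Fin n) (Fin n) ℝ) - T.submatrix Fin.succ Fin.succ := by
      ext i k
      rcases eq_or_ne i k with rfl | h
      · simp [hA]
      · simp [hA, Matrix.one_apply_ne h, Matrix.one_apply_ne ((Fin.succ_injective n).ne h)]
    rw [eval_charpoly', ← hsubA, hminor, hadj, Matrix.smul_apply, hBval, smul_eq_mul,
      Finset.mul_sum]
    rw [eval_finset_sum]
    refine Finset.sum_congr rfl fun i _ => ?_
    have hfac : det A * ((x - lam i)⁻¹ * (W 0 i)^2)
        = (W 0 i)^2 * ∏ k ∈ Finset.univ.erase i, (x - lam k) := by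
      rw [hdA, ← Finset.mul_prod_erase _ _ (Finset.mem_univ i)]
      have h2 : (x - lam i) * (x - lam i)⁻¹ = 1 := mul_inv_cancel₀ (hx' i)
      linear_combination (∏ k ∈ Finset.univ.erase i, (x - lam k)) * (W 0 i)^2 * h2
    rw [hfac, eval_mul, eval_C, hq]
    simp [eval_prod, hc]
  -- combine with hchar
  have hkey : (∑ i, C (c i) * q i) = ((n + 1 : ℝ))⁻¹ • ∑ i, q i := by
    rw [← hsub, hchar, hcp, deriv_prod_linear]
  intro j
  have hQj : eval (lam j) (q j) = ∏ k ∈ Finset.univ.erase j, (lam j - lam k) := by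
    simp [hq, eval_prod]
  have hQ0 : (∏ k ∈ Finset.univ.erase j, (lam j - lam k)) ≠ 0 := by
    refine Finset.prod_ne_zero_iff.mpr fun k hk => sub_ne_zero.mpr fun h => ?_
    exact (Finset.mem_erase.mp hk).1 (hdist h).symm
  have hvanish : ∀ i, i ≠ j → eval (lam j) (q i) = 0 := by
    intro i hij
    rw [hq]
    simp only [eval_prod]
    refine Finset.prod_eq_zero (Finset.mem_erase.mpr ⟨hij.symm, Finset.mem_univ j⟩) ?_
    simp
  have hev := congrArg (eval (lam j)) hkey
  rw [eval_finset_sum, eval_smul, eval_finset_sum] at hev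
  rw [Finset.sum_eq_single j (fun i _ hij => by rw [eval_mul, hvanish i hij, mul_zero])
    (fun h => absurd (Finset.mem_univ j) h),
    Finset.sum_eq_single j (fun i _ hij => hvanish i hij)
    (fun h => absurd (Finset.mem_univ j) h)] at hev
  rw [eval_mul, eval_C, hQj, smul_eq_mul] at hev
  have hsq : (W 0 j)^2 = ((n : ℝ) + 1)⁻¹ := mul_right_cancel₀ hQ0 hev
  have hpos : (0:ℝ) < (n:ℝ) + 1 := by positivity
  rw [← Real.sqrt_sq_eq_abs, hsq, Real.sqrt_inv, one_div]
end

section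
/- Let p and q be real monic polynomials with deg p = m, deg q = m-1, m ≥ 2, such that p has m distinct real roots and the roots of q strictly interlace those of p. Write p = s·q - r with deg r ≤ m-2 (polynomial division with sign convention). Then r has degree exactly m-2, its leading coefficient is positive, and r/γ(r) is monic with m-2 distinct real roots strictly interlacing those of q. -/
open Polynomial

theorem stmt7 (m : ℕ) (hm : 2 ≤ m)
    (μ : Fin m → ℝ) (hμ : StrictMono μ)
    (ν : Fin (m - 1) → ℝ) (hν : StrictMono ν)
    (p q : Polynomial ℝ)
    (hp : p = ∏ i : Fin m, (X - C (μ i)))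
    (hq : q = ∏ i : Fin (m - 1), (X - C (ν i)))
    (hinter : ∀ i : Fin (m - 1),
      μ ⟨i, by omega⟩ < ν i ∧ ν i < μ ⟨(i : ℕ) + 1, by omega⟩)
    (r : Polynomial ℝ) (hr : r = -(p %ₘ q)) :
    r.natDegree = m - 2 ∧ 0 < r.leadingCoeff ∧
    ∃ ρ : Fin (m - 2) → ℝ, StrictMono ρ ∧
      (∀ i : Fin (m - 2),
        ν ⟨i, by omega⟩ < ρ i ∧ ρ i < ν ⟨(i : ℕ) + 1, by omega⟩) ∧
      C r.leadingCoeff⁻¹ * r = ∏ i : Fin (m - 2), (X - C (ρ i)) := by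
  have hqm : q.Monic := by
    rw [hq]; exact monic_prod_of_monic _ _ (fun i _ => monic_X_sub_C _)
  have hq0 : q ≠ 0 := hqm.ne_zero
  have hqd : q.natDegree = m - 1 := by
    rw [hq, natDegree_prod _ _ (fun i _ => X_sub_C_ne_zero _)]
    simp [natDegree_X_sub_C]
  -- sign of p at the ν's
  have hsign : ∀ i : Fin (m - 1), 0 < (-1 : ℝ) ^ (m - 1 - (i : ℕ)) * p.eval (ν i) := by
    intro i
    have hpe : p.eval (ν i) = ∏ j : Fin m, (ν i - μ j) := by
      simp [hp, eval_prod]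
    rw [hpe, ← Finset.prod_filter_mul_prod_filter_not Finset.univ
        (fun j : Fin m => (j : ℕ) ≤ (i : ℕ))]
    have hi : (i : ℕ) < m := by omega
    have hS : Finset.univ.filter (fun j : Fin m => ¬ (j : ℕ) ≤ (i : ℕ))
        = Finset.Ioi (⟨(i : ℕ), hi⟩ : Fin m) := by
      ext j
      simp [Fin.lt_def]
    have hA : 0 < ∏ j ∈ Finset.univ.filter (fun j : Fin m => (j : ℕ) ≤ (i : ℕ)),
        (ν i - μ j) := by
      apply Finset.prod_pos
      intro j hj
      simp only [Finset.mem_filter, Finset.mem_univ, true_and] at hj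
      have h1 : μ j ≤ μ ⟨(i : ℕ), hi⟩ := hμ.monotone (by rw [Fin.le_def]; exact hj)
      have h2 := (hinter i).1
      have : μ ⟨(i : ℕ), hi⟩ = μ ⟨(i : ℕ), by omega⟩ := rfl
      linarith [h2, this ▸ h1]
    rw [hS]
    set S := Finset.Ioi (⟨(i : ℕ), hi⟩ : Fin m) with hSdef
    have hcard : S.card = m - 1 - (i : ℕ) := Fin.card_Ioi _
    have hBneg : ∀ j ∈ S, 0 < μ j - ν i := by
      intro j hj
      rw [hSdef, Finset.mem_Ioi] at hj
      have hj' : (i : ℕ) < (j : ℕ) := hj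
      have hi1 : (i : ℕ) + 1 < m := by omega
      have h1 : μ ⟨(i : ℕ) + 1, hi1⟩ ≤ μ j := hμ.monotone (by rw [Fin.le_def]; simpa using hj')
      have h2 := (hinter i).2
      have : μ ⟨(i : ℕ) + 1, hi1⟩ = μ ⟨(i : ℕ) + 1, by omega⟩ := rfl
      linarith [h2, this ▸ h1]
    have hBpos : 0 < ∏ j ∈ S, (μ j - ν i) := Finset.prod_pos hBneg
    have hBeq : ∏ j ∈ S, (μ j - ν i) = (-1 : ℝ) ^ (m - 1 - (i : ℕ)) * ∏ j ∈ S, (ν i - μ j) := by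
      rw [← hcard, ← Finset.prod_const, ← Finset.prod_mul_distrib]
      exact Finset.prod_congr rfl (fun j _ => by ring)
    rw [hBeq] at hBpos
    rw [mul_left_comm]
    exact mul_pos hA hBpos
  -- r at the ν's
  have hqeval : ∀ i : Fin (m - 1), q.eval (ν i) = 0 := by
    intro i
    rw [hq, eval_prod]
    exact Finset.prod_eq_zero (Finset.mem_univ i) (by simp)
  have hreval : ∀ i : Fin (m - 1), r.eval (ν i) = - p.eval (ν i) := by
    intro i
    rw [hr, modByMonic_eq_sub_mul_div p q]
    simp [hqeval i]
  have hrsign : ∀ i : Fin (m - 1), 0 < (-1 : ℝ) ^ (m - (i : ℕ)) * r.eval (ν i) := by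
    intro i
    have h1 : m - (i : ℕ) = (m - 1 - (i : ℕ)) + 1 := by omega
    have : (-1 : ℝ) ^ (m - (i : ℕ)) * r.eval (ν i)
        = (-1 : ℝ) ^ (m - 1 - (i : ℕ)) * p.eval (ν i) := by
      rw [hreval i, h1, pow_succ]; ring
    rw [this]
    exact hsign i
  -- r ≠ 0
  have hr0 : r ≠ 0 := by
    intro h
    have := hrsign ⟨0, by omega⟩
    rw [h] at this
    simp at this
  -- degree bound
  have hrdlt : r.natDegree < m - 1 := by
    have h1 : r.degree < q.degree := by
      rw [hr, degree_neg]
      exact degree_modByMonic_lt p hqm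
    have h2 : q.degree = ((m - 1 : ℕ) : WithBot ℕ) := by
      rw [degree_eq_natDegree hq0, hqd]
    rw [h2] at h1
    exact (natDegree_lt_iff_degree_lt hr0).mpr h1
  -- roots by IVT
  have hroot : ∀ i : Fin (m - 2), ∃ x,
      (ν ⟨(i : ℕ), by omega⟩ < x ∧ x < ν ⟨(i : ℕ) + 1, by omega⟩) ∧ r.eval x = 0 := by
    intro i
    set a : ℝ := ν ⟨(i : ℕ), by omega⟩ with ha
    set b : ℝ := ν ⟨(i : ℕ) + 1, by omega⟩ with hb
    have hab : a < b := hν (by simp [Fin.lt_def])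
    have h1 := hrsign ⟨(i : ℕ), by omega⟩
    have h2 := hrsign ⟨(i : ℕ) + 1, by omega⟩
    have he : m - (i : ℕ) = (m - ((i : ℕ) + 1)) + 1 := by omega
    set e : ℝ := (-1 : ℝ) ^ (m - ((i : ℕ) + 1)) with hedef
    rw [he, pow_succ] at h1
    have he2 : e * e = 1 := by
      rw [hedef, ← pow_add]
      exact Even.neg_one_pow ⟨m - ((i : ℕ) + 1), rfl⟩
    have hprodneg : r.eval a * r.eval b < 0 := by
      have hmul := mul_pos h1 h2
      have key : e * (-1) * r.eval a * (e * r.eval b)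
          = (e * e) * (-(r.eval a * r.eval b)) := by ring
      rw [key, he2, one_mul] at hmul
      linarith
    have hcont : ContinuousOn (fun x => r.eval x) (Set.Icc a b) :=
      (Polynomial.continuous r).continuousOn
    rcases lt_or_ge (r.eval a) 0 with hca | hca
    · have hcb : 0 < r.eval b := by nlinarith
      have h0 : (0 : ℝ) ∈ Set.Ioo (r.eval a) (r.eval b) := ⟨hca, hcb⟩
      obtain ⟨x, hx, hx0⟩ := intermediate_value_Ioo hab.le hcont h0
      exact ⟨x, ⟨hx.1, hx.2⟩, hx0⟩
    · have hca' : 0 < r.eval a := by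
        rcases lt_or_eq_of_le hca with h | h
        · exact h
        · exfalso; rw [← h] at hprodneg; simp at hprodneg
      have hcb : r.eval b < 0 := by nlinarith
      have h0 : (0 : ℝ) ∈ Set.Ioo (r.eval b) (r.eval a) := ⟨hcb, hca'⟩
      obtain ⟨x, hx, hx0⟩ := intermediate_value_Ioo' hab.le hcont h0
      exact ⟨x, ⟨hx.1, hx.2⟩, hx0⟩
  choose ρ hρ hρ0 using hroot
  -- strict monotonicity of ρ
  have hρmono : StrictMono ρ := by
    intro a b hab
    have h1 : ρ a < ν ⟨(a : ℕ) + 1, by omega⟩ := (hρ a).2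
    have h2 : ν ⟨(b : ℕ), by omega⟩ < ρ b := (hρ b).1
    have h3 : ν ⟨(a : ℕ) + 1, by omega⟩ ≤ ν ⟨(b : ℕ), by omega⟩ := by
      apply hν.monotone
      simp [Fin.le_def]
      exact hab
    linarith
  -- multiset of roots
  set M : Multiset ℝ := Finset.univ.val.map ρ with hM
  have hMnodup : M.Nodup := Multiset.Nodup.map hρmono.injective Finset.univ.nodup
  have hMcard : Multiset.card M = m - 2 := by
    rw [hM, Multiset.card_map]
    simp
  have hMle : M ≤ r.roots := by
    rw [Multiset.le_iff_subset hMnodup]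
    intro x hx
    rw [hM, Multiset.mem_map] at hx
    obtain ⟨i, _, hxi⟩ := hx
    rw [mem_roots hr0]
    exact hxi ▸ hρ0 i
  have hcardle : Multiset.card r.roots ≤ m - 2 := le_trans (card_roots' r) (by omega)
  have hMeq : M = r.roots :=
    Multiset.eq_of_le_of_card_le hMle (by rw [hMcard]; exact hcardle)
  have hdeg : r.natDegree = m - 2 := by
    have h1 : m - 2 ≤ r.natDegree := by
      rw [← hMcard, hMeq]; exact card_roots' r
    omega
  have hsplits : Splits r := by
    rw [splits_iff_card_roots, ← hMeq, hMcard, hdeg]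
  have hfact : r = C r.leadingCoeff * (∏ i : Fin (m - 2), (X - C (ρ i))) := by
    have h := hsplits.eq_prod_roots
    rw [← hMeq, hM] at h
    conv_lhs => rw [h]
    congr 1
    rw [Multiset.map_map]
    rfl
  -- leading coefficient positive
  have hlc : 0 < r.leadingCoeff := by
    have him : m - 2 < m - 1 := by omega
    set b : ℝ := ν ⟨m - 2, him⟩ with hb
    have hbsign := hrsign ⟨m - 2, him⟩
    have h2 : m - (m - 2) = 2 := by omega
    rw [h2] at hbsign
    simp only [neg_one_sq, one_mul] at hbsign
    have hP : 0 < ∏ i : Fin (m - 2), (b - ρ i) := by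
      apply Finset.prod_pos
      intro i _
      have h1 : ρ i < ν ⟨(i : ℕ) + 1, by omega⟩ := (hρ i).2
      have h3 : ν ⟨(i : ℕ) + 1, by omega⟩ ≤ ν ⟨m - 2, him⟩ := by
        apply hν.monotone
        simp [Fin.le_def]
      rw [hb]; linarith
    have heval : r.eval b = r.leadingCoeff * ∏ i : Fin (m - 2), (b - ρ i) := by
      conv_lhs => rw [hfact]
      simp [eval_prod]
    rw [heval] at hbsign
    nlinarith
  obtain ⟨c, hc⟩ : ∃ c, r.leadingCoeff = c := ⟨_, rfl⟩
  rw [hc] at hfact hlc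
  refine ⟨hdeg, hc ▸ hlc, ρ, hρmono, hρ, ?_⟩
  rw [hc, hfact, ← mul_assoc, ← C_mul, inv_mul_cancel₀ (ne_of_gt hlc), C_1, one_mul]
end

section
/- Let λ_1,...,λ_n be distinct reals and D = diag(λ_1,...,λ_n). Let P be any n×n permutation matrix and D' = P^T D P. Let Q be orthogonal with Q e_1 = e/√n, and let Q' be orthogonal with Q' e_1 = e/√n. Then the matrices A = Q^T D Q and A' = (Q')^T D' Q', after Householder tridiagonalization with transformations fixing e_1, yield unreduced tridiagonal matrices T̂ and T̂' with the same diagonal entries and the same absolute values of off-diagonal entries. -/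
open Matrix Finset

theorem stmt11 (n : ℕ)
    (lam : Fin (n + 1) → ℝ) (hdist : Function.Injective lam)
    (D D' P Q Q' A A' H H' Th Th' : Matrix (Fin (n + 1)) (Fin (n + 1)) ℝ)
    (hD : D = Matrix.diagonal lam)
    (hP : ∃ σ : Equiv.Perm (Fin (n + 1)), P = σ.permMatrix ℝ)
    (hD' : D' = Pᵀ * D * P)
    (hQ : Qᵀ * Q = 1)
    (hQe : Q.mulVec (Pi.single 0 1) = fun _ => 1 / Real.sqrt (n + 1))
    (hQ' : Q'ᵀ * Q' = 1)
    (hQ'e : Q'.mulVec (Pi.single 0 1) = fun _ => 1 / Real.sqrt (n + 1))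
    (hA : A = Qᵀ * D * Q) (hA' : A' = Q'ᵀ * D' * Q')
    (hH : Hᵀ * H = 1) (hHe : H.mulVec (Pi.single 0 1) = Pi.single 0 1)
    (hH' : H'ᵀ * H' = 1) (hH'e : H'.mulVec (Pi.single 0 1) = Pi.single 0 1)
    (hT : Th = Hᵀ * A * H) (hT' : Th' = H'ᵀ * A' * H')
    (hTtri : ∀ i j : Fin (n + 1),
      (i : ℕ) + 2 ≤ (j : ℕ) ∨ (j : ℕ) + 2 ≤ (i : ℕ) → Th i j = 0)
    (hT'tri : ∀ i j : Fin (n + 1),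
      (i : ℕ) + 2 ≤ (j : ℕ) ∨ (j : ℕ) + 2 ≤ (i : ℕ) → Th' i j = 0)
    (hTunred : ∀ i j : Fin (n + 1), (i : ℕ) = (j : ℕ) + 1 → Th i j ≠ 0)
    (hT'unred : ∀ i j : Fin (n + 1), (i : ℕ) = (j : ℕ) + 1 → Th' i j ≠ 0) :
    (∀ i, Th i i = Th' i i) ∧
      ∀ i j : Fin (n + 1), (i : ℕ) = (j : ℕ) + 1 → |Th i j| = |Th' i j| := by
  classical
  obtain ⟨σ, hPσ⟩ := hP
  set U : Matrix (Fin (n+1)) (Fin (n+1)) ℝ := Q * H with hUdef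
  set W : Matrix (Fin (n+1)) (Fin (n+1)) ℝ := Q' * H' with hWdef
  set V : Matrix (Fin (n+1)) (Fin (n+1)) ℝ := P * W with hVdef
  have hPentry : ∀ i j, P i j = if σ i = j then 1 else 0 := by
    intro i j
    rw [hPσ]
    rw [Equiv.Perm.permMatrix, PEquiv.toMatrix_toPEquiv_eq, Matrix.submatrix_apply, id, Matrix.one_apply]
  -- P is orthogonal
  have hPt : Pᵀ * P = 1 := by
    ext i j
    simp only [Matrix.mul_apply, Matrix.transpose_apply, hPentry, Matrix.one_apply,
      ite_mul, one_mul, zero_mul]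
    rw [Fintype.sum_eq_single (σ.symm i)]
    · simp [Equiv.apply_symm_apply]
    · intro k hk
      have hki : σ k ≠ i := fun h => hk (by rw [← h]; simp)
      simp [hki]
  -- P fixes constant vectors
  have hPconst : ∀ c : ℝ, P.mulVec (fun _ => c) = fun _ => c := by
    intro c
    ext i
    simp [Matrix.mulVec, dotProduct, hPentry, ite_mul]
  -- orthogonality of U and V
  have hUo : Uᵀ * U = 1 := by
    rw [hUdef, Matrix.transpose_mul, Matrix.mul_assoc, ← Matrix.mul_assoc Qᵀ Q H, hQ,
      Matrix.one_mul, hH]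
  have hWo : Wᵀ * W = 1 := by
    rw [hWdef, Matrix.transpose_mul, Matrix.mul_assoc, ← Matrix.mul_assoc Q'ᵀ Q' H', hQ',
      Matrix.one_mul, hH']
  have hVo : Vᵀ * V = 1 := by
    rw [hVdef, Matrix.transpose_mul, Matrix.mul_assoc, ← Matrix.mul_assoc Pᵀ P W, hPt,
      Matrix.one_mul, hWo]
  -- Th = Uᵀ D U and Th' = Vᵀ D V
  have hTU : Th = Uᵀ * D * U := by
    rw [hT, hA, hUdef]
    simp [Matrix.transpose_mul, Matrix.mul_assoc]
  have hT'V : Th' = Vᵀ * D * V := by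
    rw [hT', hA', hD', hVdef, hWdef]
    simp [Matrix.transpose_mul, Matrix.mul_assoc]
  -- entrywise formulas
  have hThE : ∀ i j, Th i j = ∑ m, lam m * (U m i * U m j) := by
    intro i j
    rw [hTU, hD, Matrix.mul_assoc, Matrix.mul_apply]
    refine Finset.sum_congr rfl fun m _ => ?_
    rw [Matrix.transpose_apply, Matrix.diagonal_mul]
    ring
  have hThE' : ∀ i j, Th' i j = ∑ m, lam m * (V m i * V m j) := by
    intro i j
    rw [hT'V, hD, Matrix.mul_assoc, Matrix.mul_apply]
    refine Finset.sum_congr rfl fun m _ => ?_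
    rw [Matrix.transpose_apply, Matrix.diagonal_mul]
    ring
  have hUorth : ∀ i j, (∑ m, U m i * U m j) = if i = j then (1:ℝ) else 0 := by
    intro i j
    have := congrFun (congrFun hUo i) j
    simpa [Matrix.mul_apply, Matrix.one_apply] using this
  have hVorth : ∀ i j, (∑ m, V m i * V m j) = if i = j then (1:ℝ) else 0 := by
    intro i j
    have := congrFun (congrFun hVo i) j
    simpa [Matrix.mul_apply, Matrix.one_apply] using this
  -- column equations: U * Th = D * U and V * Th' = D * V
  have hEU : ∀ i k, (∑ l, U i l * Th l k) = lam i * U i k := by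
    intro i k
    have hcomm : U * Uᵀ = 1 := mul_eq_one_comm.mp hUo
    have h1 : U * Th = D * U := by
      rw [hTU]
      calc U * (Uᵀ * D * U) = (U * Uᵀ) * (D * U) := by simp only [Matrix.mul_assoc]
        _ = D * U := by rw [hcomm, Matrix.one_mul]
    have h2 := congrFun (congrFun h1 i) k
    rw [Matrix.mul_apply, hD, Matrix.diagonal_mul] at h2
    exact h2
  have hEV : ∀ i k, (∑ l, V i l * Th' l k) = lam i * V i k := by
    intro i k
    have hcomm : V * Vᵀ = 1 := mul_eq_one_comm.mp hVo
    have h1 : V * Th' = D * V := by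
      rw [hT'V]
      calc V * (Vᵀ * D * V) = (V * Vᵀ) * (D * V) := by simp only [Matrix.mul_assoc]
        _ = D * V := by rw [hcomm, Matrix.one_mul]
    have h2 := congrFun (congrFun h1 i) k
    rw [Matrix.mul_apply, hD, Matrix.diagonal_mul] at h2
    exact h2
  -- first columns coincide
  have hU0 : ∀ i, U i 0 = 1 / Real.sqrt (n+1) := by
    intro i
    have h1 : U *ᵥ Pi.single 0 1 = fun _ => 1 / Real.sqrt (n+1) := by
      rw [hUdef, ← Matrix.mulVec_mulVec, hHe, hQe]
    have := congrFun h1 i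
    simpa using this
  have hV0 : ∀ i, V i 0 = 1 / Real.sqrt (n+1) := by
    intro i
    have h1 : V *ᵥ Pi.single 0 1 = fun _ => 1 / Real.sqrt (n+1) := by
      rw [hVdef, ← Matrix.mulVec_mulVec, hWdef, ← Matrix.mulVec_mulVec, hH'e, hQ'e,
        hPconst]
    have := congrFun h1 i
    simpa using this
  -- main induction: columns of V equal columns of U up to sign
  have key : ∀ m : ℕ, ∀ k : Fin (n+1), (k : ℕ) = m →
      ∃ s : ℝ, s^2 = 1 ∧ ∀ i, V i k = s * U i k := by
    intro m
    induction m using Nat.strong_induction_on with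
    | _ m IH =>
      intro k hk
      rcases m with _ | t
      · have hk0 : k = 0 := Fin.ext (by simpa using hk)
        subst hk0
        exact ⟨1, by norm_num, fun i => by rw [hU0, hV0, one_mul]⟩
      · -- k has value t+1; let j be the previous index
        have htn : t + 1 < n + 1 := hk ▸ k.isLt
        set j : Fin (n+1) := ⟨t, by omega⟩ with hjdef
        obtain ⟨s, hs2, hsV⟩ := IH t (by omega) j rfl
        have hsign : ∀ l : Fin (n+1), (l : ℕ) ≤ t →
            ∃ sl : ℝ, sl^2 = 1 ∧ ∀ i, V i l = sl * U i l := by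
          intro l hl
          exact IH l.val (by omega) l rfl
        have hkj' : (k : ℕ) = (j : ℕ) + 1 := by simp [hjdef, hk]
        -- termwise comparison on columns other than k
        have hterm : ∀ l : Fin (n+1), l ≠ k → ∀ i,
            V i l * Th' l j = s * (U i l * Th l j) := by
          intro l hl i
          by_cases hcase : (l : ℕ) ≤ t
          · obtain ⟨sl, hsl2, hslV⟩ := hsign l hcase
            have hT'lj : Th' l j = sl * s * Th l j := by
              rw [hThE' l j, hThE l j, Finset.mul_sum]
              refine Finset.sum_congr rfl fun m _ => ?_
              rw [hslV, hsV]; ring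
            rw [hT'lj, hslV]
            linear_combination (s * Th l j * U i l) * hsl2
          · have hlk : (l : ℕ) ≠ t + 1 := by
              intro hc
              exact hl (Fin.ext (by omega))
            have h2 : (j : ℕ) + 2 ≤ (l : ℕ) := by
              simp only [hjdef]; omega
            rw [hTtri l j (Or.inr h2), hT'tri l j (Or.inr h2)]
            ring
        -- column equations with the k-term isolated
        have hsumU : ∀ i, U i k * Th k j
            = lam i * U i j - ∑ l ∈ Finset.univ.erase k, U i l * Th l j := by
          intro i
          have hE := hEU i j
          rw [← Finset.add_sum_erase _ _ (Finset.mem_univ k)] at hE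
          linarith
        have hsumV : ∀ i, V i k * Th' k j
            = lam i * V i j - ∑ l ∈ Finset.univ.erase k, V i l * Th' l j := by
          intro i
          have hE := hEV i j
          rw [← Finset.add_sum_erase _ _ (Finset.mem_univ k)] at hE
          linarith
        have hcol : ∀ i, V i k * Th' k j = s * (U i k * Th k j) := by
          intro i
          rw [hsumV i, hsumU i, hsV]
          have hsum : (∑ l ∈ Finset.univ.erase k, V i l * Th' l j)
              = s * ∑ l ∈ Finset.univ.erase k, U i l * Th l j := by
            rw [Finset.mul_sum]
            exact Finset.sum_congr rfl fun l hl =>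
              hterm l (Finset.ne_of_mem_erase hl) i
          rw [hsum]; ring
        have hne : Th' k j ≠ 0 := hT'unred k j hkj'
        have hVk : ∀ i, V i k = (s * Th k j / Th' k j) * U i k := by
          intro i
          field_simp
          linear_combination hcol i
        refine ⟨s * Th k j / Th' k j, ?_, hVk⟩
        -- the sign squares to one, by comparing norms of the columns
        have hnV : (∑ i, V i k * V i k) = 1 := by rw [hVorth k k]; simp
        have hnU : (∑ i, U i k * U i k) = 1 := by rw [hUorth k k]; simp
        have h1 : (1:ℝ) = (s * Th k j / Th' k j)^2 := by
          calc (1:ℝ) = ∑ i, V i k * V i k := hnV.symm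
            _ = ∑ i, (s * Th k j / Th' k j)^2 * (U i k * U i k) := by
                refine Finset.sum_congr rfl fun i _ => ?_
                rw [hVk]; ring
            _ = (s * Th k j / Th' k j)^2 * ∑ i, U i k * U i k := by
                rw [← Finset.mul_sum]
            _ = (s * Th k j / Th' k j)^2 := by rw [hnU, mul_one]
        exact h1.symm
  have hsig : ∀ k : Fin (n+1), ∃ s : ℝ, s^2 = 1 ∧ ∀ i, V i k = s * U i k :=
    fun k => key k.val k rfl
  constructor
  · intro i
    obtain ⟨s, hs2, hsV⟩ := hsig i
    rw [hThE i i, hThE' i i]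
    refine Finset.sum_congr rfl fun m _ => ?_
    rw [hsV]
    linear_combination (-(lam m * U m i * U m i)) * hs2
  · intro i j hij
    obtain ⟨si, hsi2, hsiV⟩ := hsig i
    obtain ⟨sj, hsj2, hsjV⟩ := hsig j
    have h1 : Th' i j = si * sj * Th i j := by
      rw [hThE' i j, hThE i j, Finset.mul_sum]
      refine Finset.sum_congr rfl fun m _ => ?_
      rw [hsiV, hsjV]; ring
    have hasi : |si| = 1 := by nlinarith [abs_nonneg si, sq_abs si]
    have hasj : |sj| = 1 := by nlinarith [abs_nonneg sj, sq_abs sj]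
    rw [h1, abs_mul, abs_mul, hasi, hasj]
    ring
end

section
/- Let λ_1 < ... < λ_n be distinct reals (n ≥ 2), let Q be orthogonal with Q e_1 = e/√n, A = Q^T diag(λ_1,...,λ_n) Q, and let H be orthogonal with H e_1 = e_1 and T̂ = H^T A H tridiagonal. Then T̂ is unreduced: all its subdiagonal entries are nonzero. -/
open Matrix

theorem stmt12 (n : ℕ) (hn : 1 ≤ n)
    (lam : Fin (n + 1) → ℝ) (hmono : StrictMono lam)
    (Q A H Th : Matrix (Fin (n + 1)) (Fin (n + 1)) ℝ)
    (hQ : Qᵀ * Q = 1)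
    (hQe : Q.mulVec (Pi.single 0 1) = fun _ => 1 / Real.sqrt (n + 1))
    (hA : A = Qᵀ * Matrix.diagonal lam * Q)
    (hH : Hᵀ * H = 1) (hHe : H.mulVec (Pi.single 0 1) = Pi.single 0 1)
    (hT : Th = Hᵀ * A * H)
    (hTtri : ∀ i j : Fin (n + 1),
      (i : ℕ) + 2 ≤ (j : ℕ) ∨ (j : ℕ) + 2 ≤ (i : ℕ) → Th i j = 0) :
    ∀ i j : Fin (n + 1), (i : ℕ) = (j : ℕ) + 1 → Th i j ≠ 0 := by
  intro i j hij hTij0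
  set P := Q * H with hP
  have hPo : Pᵀ * P = 1 := by
    rw [hP, transpose_mul]
    calc Hᵀ * Qᵀ * (Q * H) = Hᵀ * (Qᵀ * Q) * H := by
          simp only [Matrix.mul_assoc]
      _ = 1 := by rw [hQ, Matrix.mul_one, hH]
  have hPPt : P * Pᵀ = 1 := mul_eq_one_comm.mp hPo
  have hThP : Th = Pᵀ * Matrix.diagonal lam * P := by
    rw [hT, hA, hP, transpose_mul]
    simp only [Matrix.mul_assoc]
  have hsym : Th j i = 0 := by
    have hTsym : Thᵀ = Th := by
      rw [hThP]
      simp [transpose_mul, transpose_transpose, Matrix.diagonal_transpose,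
        Matrix.mul_assoc]
    have : Thᵀ i j = Th i j := congrFun (congrFun hTsym i) j
    rw [transpose_apply] at this
    rw [this, hTij0]
  have hpow : ∀ m : ℕ,
      Th ^ m = Pᵀ * Matrix.diagonal (fun k => lam k ^ m) * P := by
    intro m
    induction m with
    | zero =>
        simp [Matrix.diagonal_one, hPo]
    | succ m ih =>
        rw [pow_succ, ih, hThP]
        calc Pᵀ * Matrix.diagonal (fun k => lam k ^ m) * P *
              (Pᵀ * Matrix.diagonal lam * P)
            = Pᵀ * (Matrix.diagonal (fun k => lam k ^ m) * ((P * Pᵀ) *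
                (Matrix.diagonal lam * P))) := by simp only [Matrix.mul_assoc]
          _ = Pᵀ * (Matrix.diagonal (fun k => lam k ^ m) *
                Matrix.diagonal lam) * P := by
                rw [hPPt, Matrix.one_mul]; simp only [Matrix.mul_assoc]
          _ = Pᵀ * Matrix.diagonal (fun k => lam k ^ (m + 1)) * P := by
                rw [Matrix.diagonal_mul_diagonal]
                have he : (fun k => lam k ^ m * lam k) = fun k => lam k ^ (m + 1) := by
                  funext k; ring
                rw [he]
  -- invariance: entries (k, l) with k ≤ j < l of Th ^ m vanish
  have hzero : ∀ m : ℕ, ∀ k l : Fin (n + 1),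
      (k : ℕ) ≤ (j : ℕ) → (j : ℕ) < (l : ℕ) → (Th ^ m) k l = 0 := by
    intro m
    induction m with
    | zero =>
        intro k l hk hl
        have hkl : k ≠ l := by
          intro h; subst h; omega
        simp [Matrix.one_apply, hkl]
    | succ m ih =>
        intro k l hk hl
        rw [pow_succ, Matrix.mul_apply]
        refine Finset.sum_eq_zero fun t _ => ?_
        by_cases ht : (t : ℕ) ≤ (j : ℕ)
        · have hTh : Th t l = 0 := by
            by_cases hl2 : (t : ℕ) + 2 ≤ (l : ℕ)
            · exact hTtri t l (Or.inl hl2)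
            · have htj : (t : ℕ) = (j : ℕ) := by omega
              have hlj : (l : ℕ) = (j : ℕ) + 1 := by omega
              have ht' : t = j := Fin.ext htj
              have hl' : l = i := Fin.ext (by omega)
              rw [ht', hl']
              exact hsym
          rw [hTh, mul_zero]
        · rw [ih k t hk (by omega), zero_mul]
  -- first column of P
  have hPcol : ∀ k, P k 0 = 1 / Real.sqrt (n + 1) := by
    intro k
    have hPe : P.mulVec (Pi.single 0 1) = fun _ => 1 / Real.sqrt (n + 1) := by
      rw [hP, ← Matrix.mulVec_mulVec, hHe, hQe]
    have := congrFun hPe k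
    simpa [Matrix.mulVec, dotProduct, Pi.single_apply, mul_ite,
      Finset.sum_ite_eq'] using this
  have hsqrt : (1 : ℝ) / Real.sqrt (n + 1) ≠ 0 := by
    have : (0 : ℝ) < Real.sqrt (n + 1) := Real.sqrt_pos.mpr (by positivity)
    positivity
  -- the key sums vanish
  have hsum : ∀ m : ℕ, ∑ k, lam k ^ m * P k i = 0 := by
    intro m
    have h0 : (Th ^ m) 0 i = 0 := by
      refine hzero m 0 i (by simp) (by omega)
    rw [hpow m] at h0
    rw [Matrix.mul_apply] at h0
    have h0' : ∑ t, (P t 0 * lam t ^ m) * P t i = 0 := by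
      refine Eq.trans ?_ h0
      refine Finset.sum_congr rfl fun t _ => ?_
      rw [Matrix.mul_diagonal, transpose_apply]
    have h2 : (1 / Real.sqrt (n + 1)) * ∑ k, lam k ^ m * P k i = 0 := by
      rw [Finset.mul_sum]
      refine Eq.trans ?_ h0'
      refine Finset.sum_congr rfl fun t _ => ?_
      rw [hPcol t]; ring
    exact (mul_eq_zero.mp h2).resolve_left hsqrt
  -- Vandermonde
  set c : Fin (n + 1) → ℝ := fun k => P k i with hc
  have hM : ((Matrix.vandermonde lam)ᵀ).mulVec c = 0 := by
    funext m
    have := hsum (m : ℕ)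
    simpa [Matrix.mulVec, dotProduct, Matrix.vandermonde,
      transpose_apply, hc] using this
  have hdet : ((Matrix.vandermonde lam)ᵀ).det ≠ 0 := by
    rw [Matrix.det_transpose, Matrix.det_vandermonde]
    refine Finset.prod_ne_zero_iff.mpr fun a _ => ?_
    refine Finset.prod_ne_zero_iff.mpr fun b hb => ?_
    have hab : a < b := Finset.mem_Ioi.mp hb
    exact sub_ne_zero_of_ne (ne_of_gt (hmono hab))
  have hc0 : c = 0 := Matrix.eq_zero_of_mulVec_eq_zero hdet hM
  have h1 : (Pᵀ * P) i i = 1 := by rw [hPo]; simp [Matrix.one_apply]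
  rw [Matrix.mul_apply] at h1
  have : (∑ k, Pᵀ i k * P k i) = 0 := by
    refine Finset.sum_eq_zero fun k _ => ?_
    have : P k i = 0 := congrFun hc0 k
    rw [this, mul_zero]
  rw [this] at h1
  exact one_ne_zero h1.symm
end

section
/- Let λ_1 < ... < λ_n be distinct reals and let T be any real symmetric unreduced tridiagonal matrix with these eigenvalues, diagonalized as W^T T W = diag(λ_1,...,λ_n) with W orthogonal and first row of W equal to e^T/√n. Then the characteristic polynomial of T is p(x) = ∏_{i=1}^n (x - λ_i), and the characteristic polynomial of T(2:n,2:n) is p'(x)/n. -/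
open Polynomial Matrix

private lemma derivative_prod_finset {ι R : Type*} [DecidableEq ι] [CommRing R]
    (s : Finset ι) (f : ι → R[X]) :
    derivative (∏ i ∈ s, f i) =
      ∑ i ∈ s, (∏ j ∈ s.erase i, f j) * derivative (f i) := by
  classical
  rw [Finset.prod_eq_multiset_prod, Polynomial.derivative_prod, Finset.sum_eq_multiset_sum]
  congr 1

theorem stmt15 (n : ℕ)
    (lam : Fin (n + 1) → ℝ) (hmono : StrictMono lam)
    (T W : Matrix (Fin (n + 1)) (Fin (n + 1)) ℝ)
    (hTsymm : T.IsSymm)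
    (hTtri : ∀ i j : Fin (n + 1), (i : ℕ) + 2 ≤ (j : ℕ) → T i j = 0)
    (hTunred : ∀ i j : Fin (n + 1), (i : ℕ) = (j : ℕ) + 1 → T i j ≠ 0)
    (hW : Wᵀ * W = 1) (hTW : Wᵀ * T * W = Matrix.diagonal lam)
    (hrow : ∀ j, W 0 j = 1 / Real.sqrt (n + 1)) :
    T.charpoly = ∏ i : Fin (n + 1), (X - C (lam i)) ∧
    (T.submatrix Fin.succ Fin.succ).charpoly =
      ((n + 1 : ℝ))⁻¹ • derivative (∏ i : Fin (n + 1), (X - C (lam i))) := by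
  classical
  have hW2 : W * Wᵀ = 1 := mul_eq_one_comm.mp hW
  have hT : T = W * Matrix.diagonal lam * Wᵀ := by
    calc T = (W * Wᵀ) * T * (W * Wᵀ) := by rw [hW2]; simp
    _ = W * (Wᵀ * T * W) * Wᵀ := by noncomm_ring
    _ = W * Matrix.diagonal lam * Wᵀ := by rw [hTW]
  set Wp : Matrix (Fin (n + 1)) (Fin (n + 1)) ℝ[X] := W.map (C : ℝ →+* ℝ[X]) with hWp
  have hWpT : Wᵀ.map (C : ℝ →+* ℝ[X]) = Wpᵀ := by ext i j; simp [hWp]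
  have hWp2 : Wp * Wpᵀ = 1 := by
    rw [← hWpT, ← Matrix.map_mul, hW2]
    exact Matrix.map_one _ (map_zero _) (map_one _)
  have hWp1 : Wpᵀ * Wp = 1 := mul_eq_one_comm.mp hWp2
  have hch : ∀ (A : Matrix (Fin (n + 1)) (Fin (n + 1)) ℝ),
      charmatrix A = (X : ℝ[X]) • (1 : Matrix (Fin (n+1)) (Fin (n+1)) ℝ[X])
        - A.map (C : ℝ →+* ℝ[X]) := by
    intro A
    ext i j
    rw [charmatrix_apply]
    by_cases h : i = j <;>
      simp [Matrix.sub_apply, Matrix.diagonal_apply, Matrix.one_apply, h]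
  have key : charmatrix T = Wp * charmatrix (Matrix.diagonal lam) * Wpᵀ := by
    rw [hch, hch, Matrix.mul_sub, Matrix.sub_mul]
    congr 1
    · rw [Matrix.mul_smul, Matrix.mul_one, Matrix.smul_mul, hWp2]
    · rw [← hWpT, ← Matrix.map_mul, ← Matrix.map_mul, ← hT]
  have hchD : charmatrix (Matrix.diagonal lam)
      = Matrix.diagonal (fun i => (X : ℝ[X]) - C (lam i)) := by
    ext i j
    by_cases h : i = j
    · subst h; simp [charmatrix_apply_eq]
    · rw [charmatrix_apply_ne _ _ _ h, Matrix.diagonal_apply_ne _ h,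
        Matrix.diagonal_apply_ne _ h]
      simp
  have hdetWp : Wpᵀ.det * Wp.det = 1 := by
    rw [← Matrix.det_mul, hWp1, Matrix.det_one]
  have part1 : T.charpoly = ∏ i : Fin (n + 1), (X - C (lam i)) := by
    rw [Matrix.charpoly, key, Matrix.det_mul, Matrix.det_mul, hchD, Matrix.det_diagonal]
    calc Wp.det * (∏ i, (X - C (lam i))) * Wpᵀ.det
        = (Wpᵀ.det * Wp.det) * ∏ i, (X - C (lam i)) := by ring
      _ = ∏ i, (X - C (lam i)) := by rw [hdetWp, one_mul]
  refine ⟨part1, ?_⟩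
  -- adjugates of Wp
  have hadjWp : adjugate Wp = Wp.det • Wpᵀ := by
    calc adjugate Wp = (Wpᵀ * Wp) * adjugate Wp := by rw [hWp1, Matrix.one_mul]
      _ = Wpᵀ * (Wp * adjugate Wp) := by rw [Matrix.mul_assoc]
      _ = Wp.det • Wpᵀ := by rw [Matrix.mul_adjugate, Matrix.mul_smul, Matrix.mul_one]
  have hadjWpT : adjugate Wpᵀ = Wpᵀ.det • Wp := by
    calc adjugate Wpᵀ = (Wp * Wpᵀ) * adjugate Wpᵀ := by rw [hWp2, Matrix.one_mul]
      _ = Wp * (Wpᵀ * adjugate Wpᵀ) := by rw [Matrix.mul_assoc]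
      _ = Wpᵀ.det • Wp := by rw [Matrix.mul_adjugate, Matrix.mul_smul, Matrix.mul_one]
  set g : Fin (n + 1) → ℝ[X] := fun i => ∏ j ∈ Finset.univ.erase i, (X - C (lam j)) with hg
  have hadj : adjugate (charmatrix T) = Wp * Matrix.diagonal g * Wpᵀ := by
    rw [key, Matrix.adjugate_mul_distrib, Matrix.adjugate_mul_distrib, hadjWp, hadjWpT, hchD,
      Matrix.adjugate_diagonal]
    simp only [Matrix.smul_mul, Matrix.mul_smul, smul_smul, Matrix.mul_assoc]
    rw [mul_comm Wp.det Wpᵀ.det, hdetWp, one_smul, hg]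
  -- charpoly of the submatrix is the (0,0) entry of the adjugate
  have hsubch : charmatrix (T.submatrix Fin.succ Fin.succ)
      = (charmatrix T).submatrix Fin.succ Fin.succ := by
    refine Matrix.ext fun i j => ?_
    simp [Matrix.submatrix_apply, charmatrix_apply, Matrix.diagonal_apply, Fin.succ_inj]
  have hsub : (T.submatrix Fin.succ Fin.succ).charpoly = adjugate (charmatrix T) 0 0 := by
    rw [Matrix.adjugate_fin_succ_eq_det_submatrix]
    simp only [Fin.val_zero, add_zero, pow_zero, one_mul, Fin.succAbove_zero]
    rw [Matrix.charpoly, hsubch]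
  -- compute the (0,0) entry
  have hn : (0:ℝ) ≤ (n : ℝ) + 1 := by positivity
  have hWsq : ∀ i, W 0 i * W 0 i = ((n : ℝ) + 1)⁻¹ := by
    intro i
    rw [hrow i]
    rw [div_mul_div_comm, one_mul, Real.mul_self_sqrt hn, one_div]
  have hentry : (Wp * Matrix.diagonal g * Wpᵀ) 0 0
      = C (((n : ℝ) + 1)⁻¹) * ∑ i, g i := by
    rw [Matrix.mul_apply]
    simp only [Matrix.mul_diagonal, Matrix.transpose_apply]
    rw [Finset.mul_sum]
    refine Finset.sum_congr rfl fun i _ => ?_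
    have : Wp 0 i = C (W 0 i) := rfl
    rw [this, mul_comm (C (W 0 i)) (g i), mul_assoc, ← C_mul, hWsq i, mul_comm]
  have hder : derivative (∏ i : Fin (n + 1), (X - C (lam i))) = ∑ i, g i := by
    rw [_root_.derivative_prod_finset]
    refine Finset.sum_congr rfl fun i _ => ?_
    rw [derivative_sub, derivative_X, derivative_C, sub_zero, mul_one]
  rw [hsub, hadj, hentry, hder, Polynomial.smul_eq_C_mul]
end

section
/- Let u(x) = ∏_{i=1}^n (x - λ_i) with λ_1 < ... < λ_n real, and let T be the symmetric tridiagonal matrix produced by Schmeisser's algorithm applied to u (assuming the algorithm is well-defined, i.e., each remainder r_ν has degree exactly n-ν-1 and positive leading coefficient γ_ν). Then the characteristic polynomial of T equals u, so the eigenvalues of T are exactly λ_1,...,λ_n. -/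
open Polynomial

/-- The `n × n` symmetric tridiagonal matrix with diagonal entries `a 1, ..., a n`
(entry `(i,i)` in 1-based indexing is `a i`) and off-diagonal entries
`b 2, ..., b n` (entries `(i, i-1)` and `(i-1, i)` in 1-based indexing equal `b i`). -/
def tridiag (n : ℕ) (a b : ℕ → ℝ) : Matrix (Fin n) (Fin n) ℝ :=
  fun i j =>
    if (i : ℕ) = j then a (i + 1)
    else if (i : ℕ) + 1 = j then b ((j : ℕ) + 1)
    else if (j : ℕ) + 1 = i then b ((i : ℕ) + 1)
    else 0

def tridiagP {R : Type*} [CommRing R] (n : ℕ) (A B : ℕ → R) : Matrix (Fin n) (Fin n) R :=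
  fun i j =>
    if (i : ℕ) = j then A (i + 1)
    else if (i : ℕ) + 1 = j then B ((j : ℕ) + 1)
    else if (j : ℕ) + 1 = i then B ((i : ℕ) + 1)
    else 0

lemma tridiagP_minor {R : Type*} [CommRing R] (k : ℕ) (A B : ℕ → R) :
    (tridiagP (k+1) A B).submatrix Fin.succ Fin.succ
      = tridiagP k (fun m => A (m+1)) (fun m => B (m+1)) := by
  ext i j
  simp only [Matrix.submatrix_apply, tridiagP, Fin.val_succ]
  split_ifs with h1 h2 h3 h4 h5 h6 h7 h8 <;> first | rfl | omega | (exfalso; omega)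

lemma det_tridiagP_rec {R : Type*} [CommRing R] (k : ℕ) (A B : ℕ → R) :
    (tridiagP (k+2) A B).det =
      A 1 * (tridiagP (k+1) (fun m => A (m+1)) (fun m => B (m+1))).det
      - B 2 * B 2 * (tridiagP k (fun m => A (m+2)) (fun m => B (m+2))).det := by
  rw [Matrix.det_succ_row_zero]
  rw [Fin.sum_univ_succ, Fin.sum_univ_succ]
  simp only [Fin.succ_zero_eq_one]
  have hzero : ∀ j : Fin k, (tridiagP (k+2) A B) 0 j.succ.succ = 0 := by
    intro j
    simp [tridiagP, Fin.val_succ]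
  rw [Finset.sum_eq_zero (fun j _ => by rw [hzero j]; ring)]
  have h00 : (tridiagP (k+2) A B) 0 0 = A 1 := by simp [tridiagP]
  have h01 : (tridiagP (k+2) A B) 0 1 = B 2 := by
    simp [tridiagP]
  rw [h00, h01]
  have hm0 : ((tridiagP (k+2) A B).submatrix Fin.succ (Fin.succAbove 0)).det
      = (tridiagP (k+1) (fun m => A (m+1)) (fun m => B (m+1))).det := by
    rw [Fin.succAbove_zero, tridiagP_minor]
  -- second minor
  have hm1 : ((tridiagP (k+2) A B).submatrix Fin.succ (Fin.succAbove 1)).det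
      = B 2 * (tridiagP k (fun m => A (m+2)) (fun m => B (m+2))).det := by
    rw [Matrix.det_succ_column_zero]
    rw [Fin.sum_univ_succ]
    have hz : ∀ i : Fin k,
        ((tridiagP (k+2) A B).submatrix Fin.succ (Fin.succAbove 1)) i.succ 0 = 0 := by
      intro i
      simp [Matrix.submatrix_apply, Fin.one_succAbove_zero, tridiagP, Fin.val_succ]
    rw [Finset.sum_eq_zero (fun i _ => by rw [hz i]; ring)]
    have h10 : ((tridiagP (k+2) A B).submatrix Fin.succ (Fin.succAbove 1)) 0 0 = B 2 := by
      simp [Matrix.submatrix_apply, Fin.one_succAbove_zero, tridiagP]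
    rw [h10]
    have : ((tridiagP (k+2) A B).submatrix Fin.succ (Fin.succAbove 1)).submatrix
        (Fin.succAbove 0) Fin.succ = tridiagP k (fun m => A (m+2)) (fun m => B (m+2)) := by
      ext i j
      simp only [Matrix.submatrix_apply, Fin.succAbove_zero, Fin.one_succAbove_succ,
        tridiagP, Fin.val_succ]
      split_ifs with h1 h2 h3 h4 h5 h6 h7 h8 <;> first | rfl | omega | (exfalso; omega)
    rw [this]
    simp
  rw [hm0, hm1]
  simp only [Fin.val_zero, Fin.val_one, pow_zero, pow_one]
  ring

/-- Schmeisser's algorithm (its well-defined run): `f 1 = u`, `f 2 = u'/n`, and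
for `ν = 1, ..., n-1`, `f ν = q ν * f (ν+1) - γ ν * f (ν+2)` where each `f ν` is
monic of degree `n + 1 - ν`, each `γ ν > 0` (the leading coefficient of the
remainder `r ν`), and `q n = f n`. The resulting matrix is tridiagonal with
diagonal entries `-(q ν).eval 0` and off-diagonal entries `√(γ ν)`. -/
theorem stmt16 (n : ℕ) (hn : 1 ≤ n)
    (lam : Fin n → ℝ) (hmono : StrictMono lam)
    (u : Polynomial ℝ) (hu : u = ∏ i : Fin n, (X - C (lam i)))
    (f q : ℕ → Polynomial ℝ) (γ : ℕ → ℝ)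
    (hf1 : f 1 = u) (hf2 : f 2 = (n : ℝ)⁻¹ • derivative u)
    (hγ : ∀ ν, 1 ≤ ν → ν ≤ n - 1 → 0 < γ ν)
    (hdiv : ∀ ν, 1 ≤ ν → ν ≤ n - 1 →
      f ν = q ν * f (ν + 1) - C (γ ν) * f (ν + 2))
    (hfm : ∀ ν, 1 ≤ ν → ν ≤ n + 1 → (f ν).Monic ∧ (f ν).natDegree = n + 1 - ν)
    (hqn : q n = f n)
    (T : Matrix (Fin n) (Fin n) ℝ)
    (hT : T = tridiag n (fun ν => -(q ν).eval 0)
      (fun k => Real.sqrt (γ (k - 1)))) :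
    T.charpoly = u := by
  -- f (n+1) = 1
  have hfn1 : f (n + 1) = 1 := by
    obtain ⟨hm, hd⟩ := hfm (n + 1) (by omega) le_rfl
    exact (hm.natDegree_eq_zero).mp (by omega)
  -- each q ν (1 ≤ ν ≤ n) is monic of natDegree 1
  have hq : ∀ ν, 1 ≤ ν → ν ≤ n → (q ν).Monic ∧ (q ν).natDegree = 1 := by
    intro ν h1 h2
    rcases eq_or_lt_of_le h2 with rfl | hlt
    · obtain ⟨hm, hd⟩ := hfm ν h1 (by omega)
      rw [hqn]
      exact ⟨hm, by omega⟩
    · have h2' : ν ≤ n - 1 := by omega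
      obtain ⟨hm1, hd1⟩ := hfm ν h1 (by omega)
      obtain ⟨hm2, hd2⟩ := hfm (ν + 1) (by omega) (by omega)
      obtain ⟨hm3, hd3⟩ := hfm (ν + 2) (by omega) (by omega)
      have heq : q ν * f (ν + 1) = f ν + C (γ ν) * f (ν + 2) := by
        rw [hdiv ν h1 h2']; ring
      have hdlt : (C (γ ν) * f (ν + 2)).degree < (f ν).degree := by
        calc (C (γ ν) * f (ν + 2)).degree ≤ 0 + (f (ν + 2)).degree :=
              le_trans (degree_mul_le _ _) (add_le_add degree_C_le le_rfl)
          _ = ((n + 1 - (ν + 2) : ℕ) : WithBot ℕ) := by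
              rw [zero_add, degree_eq_natDegree hm3.ne_zero, hd3]
          _ < ((n + 1 - ν : ℕ) : WithBot ℕ) := by exact_mod_cast (by omega : n + 1 - (ν+2) < n + 1 - ν)
          _ = (f ν).degree := by rw [degree_eq_natDegree hm1.ne_zero, hd1]
      have hrm : (f ν + C (γ ν) * f (ν + 2)).Monic := hm1.add_of_left hdlt
      have hpm : (q ν * f (ν + 1)).Monic := by rw [heq]; exact hrm
      have hqm : (q ν).Monic := Monic.of_mul_monic_right hm2 hpm
      have hdeg : (q ν * f (ν + 1)).natDegree = (f ν).natDegree := by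
        rw [heq]
        exact natDegree_eq_of_degree_eq (degree_add_eq_left_of_degree_lt hdlt)
      rw [hqm.natDegree_mul hm2] at hdeg
      exact ⟨hqm, by omega⟩
  set a : ℕ → ℝ := fun m => -(q m).eval 0 with ha
  set b : ℕ → ℝ := fun k => Real.sqrt (γ (k - 1)) with hb
  set AA : ℕ → Polynomial ℝ := fun m => X - C (a m) with hAA
  set BB : ℕ → Polynomial ℝ := fun m => -C (b m) with hBB
  have hAAq : ∀ ν, 1 ≤ ν → ν ≤ n → AA ν = q ν := by
    intro ν h1 h2
    obtain ⟨hm, hd⟩ := hq ν h1 h2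
    have := eq_X_add_C_of_degree_le_one (p := q ν)
      (by rw [degree_eq_natDegree hm.ne_zero, hd]; exact_mod_cast le_rfl)
    have hc1 : (q ν).coeff 1 = 1 := by
      have := hm.leadingCoeff
      rwa [Polynomial.leadingCoeff, hd] at this
    rw [hc1, Polynomial.C_1, one_mul, coeff_zero_eq_eval_zero] at this
    rw [hAA]
    simp only [ha, map_neg, sub_neg_eq_add]
    exact this.symm
  have hchar : Matrix.charmatrix T = tridiagP n AA BB := by
    rw [hT]
    apply Matrix.ext
    intro i j
    by_cases h : i = j
    · subst h
      rw [Matrix.charmatrix_apply_eq]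
      simp [tridiag, tridiagP, hAA]
    · rw [Matrix.charmatrix_apply_ne _ _ _ h]
      have h' : (i : ℕ) ≠ (j : ℕ) := fun hc => h (Fin.ext hc)
      simp only [tridiag, tridiagP, if_neg h']
      split_ifs <;> simp [hBB, hb]
  -- main induction
  have key : ∀ k, k ≤ n →
      (tridiagP k (fun m => AA (m + (n - k))) (fun m => BB (m + (n - k)))).det
        = f (n + 1 - k) := by
    intro k
    induction k using Nat.strong_induction_on with
    | _ k ih =>
      match k with
      | 0 =>
        intro _
        rw [Matrix.det_fin_zero]
        rw [show n + 1 - 0 = n + 1 from rfl, hfn1]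
      | 1 =>
        intro _
        rw [Matrix.det_fin_one]
        have : (tridiagP 1 (fun m => AA (m + (n - 1))) (fun m => BB (m + (n - 1)))) 0 0
            = AA (1 + (n - 1)) := by simp [tridiagP]
        rw [this, show 1 + (n - 1) = n by omega, hAAq n hn le_rfl, hqn,
          show n + 1 - 1 = n by omega]
      | (k + 2) =>
        intro hk
        rw [det_tridiagP_rec]
        have e1 : (fun m => AA (m + 1 + (n - (k + 2)))) = (fun m => AA (m + (n - (k + 1)))) := by
          funext m; congr 1; omega
        have e2 : (fun m => BB (m + 1 + (n - (k + 2)))) = (fun m => BB (m + (n - (k + 1)))) := by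
          funext m; congr 1; omega
        have e3 : (fun m => AA (m + 2 + (n - (k + 2)))) = (fun m => AA (m + (n - k))) := by
          funext m; congr 1; omega
        have e4 : (fun m => BB (m + 2 + (n - (k + 2)))) = (fun m => BB (m + (n - k))) := by
          funext m; congr 1; omega
        simp only [e1, e2, e3, e4]
        rw [ih (k + 1) (by omega) (by omega), ih k (by omega) (by omega)]
        set ν := n - k - 1 with hν
        have hν1 : 1 ≤ ν := by omega
        have hν2 : ν ≤ n - 1 := by omega
        have eA : 1 + (n - (k + 2)) = ν := by omega
        have eB : 2 + (n - (k + 2)) = n - k := by omega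
        rw [eA, eB, hAAq ν hν1 (by omega)]
        have hBsq : BB (n - k) * BB (n - k) = C (γ ν) := by
          show (-C (Real.sqrt (γ (n - k - 1)))) * (-C (Real.sqrt (γ (n - k - 1)))) = _
          rw [neg_mul_neg, ← Polynomial.C_mul,
            Real.mul_self_sqrt (le_of_lt (hγ ν hν1 hν2))]
        rw [hBsq, show n + 1 - (k + 1) = ν + 1 by omega, show n + 1 - k = ν + 2 by omega,
          show n + 1 - (k + 2) = ν by omega]
        exact (hdiv ν hν1 hν2).symm
  have hkey := key n le_rfl
  have h0 : (fun m => AA (m + (n - n))) = AA := by funext m; simp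
  have h0' : (fun m => BB (m + (n - n))) = BB := by funext m; simp
  rw [h0, h0', show n + 1 - n = 1 by omega, hf1] at hkey
  rw [Matrix.charpoly, hchar, hkey]
end

section
/- Let λ_1 < ... < λ_n be real (n ≥ 2) and let T be the tridiagonal matrix from Schmeisser's algorithm applied to u(x) = ∏(x - λ_i), assumed well-defined with all γ_ν > 0. If W is orthogonal with W^T T W = diag(λ_1,...,λ_n), then every entry of the first row of W has absolute value 1/√n. -/
open Polynomial Matrix


lemma adj_zero_zero (A : ℕ → ℕ → ℝ) (m : ℕ) :
    Matrix.adjugate (Matrix.of fun i j : Fin (m+1) => A i j) 0 0 =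
      (Matrix.of fun i j : Fin m => A (1+i) (1+j)).det := by
  rw [Matrix.adjugate_apply, Matrix.det_succ_row_zero]
  rw [Fin.sum_univ_succ]
  have htail : ∀ j : Fin m,
      (-1 : ℝ) ^ ((j.succ : Fin (m+1)) : ℕ) *
        (((Matrix.of fun i j : Fin (m+1) => A i j)).updateRow 0 (Pi.single 0 1)) 0 j.succ *
        ((((Matrix.of fun i j : Fin (m+1) => A i j)).updateRow 0
          (Pi.single 0 1)).submatrix Fin.succ j.succ.succAbove).det = 0 := by
    intro j
    rw [Matrix.updateRow_self, Pi.single_eq_of_ne (Fin.succ_ne_zero j)]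
    ring
  rw [Finset.sum_eq_zero (fun j _ => htail j), add_zero]
  rw [Matrix.updateRow_self, Pi.single_eq_same]
  have hsub : ((((Matrix.of fun i j : Fin (m+1) => A i j)).updateRow 0
      (Pi.single 0 1)).submatrix Fin.succ (Fin.succAbove 0)) =
      Matrix.of fun i j : Fin m => A (1+i) (1+j) := by
    ext i j
    rw [Fin.succAbove_zero, Matrix.submatrix_apply, Matrix.updateRow_ne (Fin.succ_ne_zero i)]
    show A (i.succ : ℕ) (j.succ : ℕ) = A (1+i) (1+j)
    simp only [Fin.val_succ]
    congr 1 <;> omega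
  rw [hsub]
  simp

lemma eval_monic_deg_one {p : Polynomial ℝ} (hm : p.Monic) (hd : p.natDegree = 1) (x : ℝ) :
    p.eval x = x + p.eval 0 := by
  have h := Polynomial.eq_X_add_C_of_natDegree_le_one (le_of_eq hd)
  have h1 : p.coeff 1 = 1 := by
    have := hm.coeff_natDegree
    rwa [hd] at this
  rw [h1, Polynomial.C_1, one_mul] at h
  rw [h]; simp

lemma eval_deriv_prod {n : ℕ} (lam : Fin n → ℝ) (j : Fin n) :
    (derivative (∏ i : Fin n, (X - C (lam i)))).eval (lam j) =
      ∏ i ∈ Finset.univ.erase j, (lam j - lam i) := by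
  have h1 : (∏ i : Fin n, (X - C (lam i))) = Lagrange.nodal Finset.univ lam := rfl
  rw [h1, Lagrange.eval_nodal_derivative_eval_node_eq (Finset.mem_univ j),
    Lagrange.eval_nodal]

lemma det_tridiag_step (A : ℕ → ℕ → ℝ) (htri : ∀ i j : ℕ, i + 1 < j → A i j = 0 ∧ A j i = 0)
    (b m : ℕ) :
    (Matrix.of fun i j : Fin (m+2) => A (b + i) (b + j)).det =
      A b b * (Matrix.of fun i j : Fin (m+1) => A (b+1+i) (b+1+j)).det
      - A b (b+1) * (A (b+1) b * (Matrix.of fun i j : Fin m => A (b+2+i) (b+2+j)).det) := by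
  set M : Matrix (Fin (m+2)) (Fin (m+2)) ℝ := Matrix.of fun i j : Fin (m+2) => A (b + i) (b + j)
    with hMdef
  have hsa : ∀ i : Fin (m+1),
      (((Fin.succ 0 : Fin (m+2)).succAbove i) : ℕ) = if (i:ℕ) < 1 then (i:ℕ) else (i:ℕ)+1 := by
    intro i
    rw [Fin.succAbove]
    split_ifs with h1 h2 h3
    · simp
    · simp [Fin.lt_def] at h1 h2; omega
    · simp [Fin.lt_def] at h1 h3; omega
    · simp
  rw [Matrix.det_succ_row_zero, Fin.sum_univ_succ, Fin.sum_univ_succ]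
  have htail : ∀ j : Fin m,
      (-1 : ℝ) ^ ((j.succ.succ : Fin (m+2)) : ℕ) * M 0 j.succ.succ *
        (M.submatrix Fin.succ j.succ.succ.succAbove).det = 0 := by
    intro j
    have h0 : M 0 j.succ.succ = 0 := by
      show A (b + ((0 : Fin (m+2)) : ℕ)) (b + (j.succ.succ : ℕ)) = 0
      simp only [Fin.val_succ, Fin.val_zero]
      exact (htri (b + 0) (b + (j + 1 + 1)) (by omega)).1
    rw [h0]; ring
  rw [Finset.sum_eq_zero (fun j _ => htail j), add_zero]
  -- j = 0 term
  have hM00 : M 0 0 = A b b := by show A (b + 0) (b + 0) = A b b; norm_num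
  have hmin0 : M.submatrix Fin.succ (Fin.succAbove 0) =
      Matrix.of fun i j : Fin (m+1) => A (b+1+i) (b+1+j) := by
    ext i j
    rw [Fin.succAbove_zero, Matrix.submatrix_apply]
    show A (b + (i.succ : ℕ)) (b + (j.succ : ℕ)) = A (b+1+i) (b+1+j)
    simp only [Fin.val_succ]
    congr 1 <;> omega
  -- j = 1 term
  have hM01 : M 0 (Fin.succ 0) = A b (b+1) := by
    show A (b + ((0 : Fin (m+2)) : ℕ)) (b + ((Fin.succ 0 : Fin (m+2)) : ℕ)) = A b (b+1)
    simp only [Fin.val_succ, Fin.val_zero]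
    norm_num
  have hmin1 : (M.submatrix Fin.succ (Fin.succ 0).succAbove).det =
      A (b+1) b * (Matrix.of fun i j : Fin m => A (b+2+i) (b+2+j)).det := by
    rw [Matrix.det_succ_column_zero, Fin.sum_univ_succ]
    have htail2 : ∀ i : Fin m,
        (-1 : ℝ) ^ ((i.succ : Fin (m+1)) : ℕ) *
          (M.submatrix Fin.succ (Fin.succ 0).succAbove) i.succ 0 *
          ((M.submatrix Fin.succ (Fin.succ 0).succAbove).submatrix i.succ.succAbove
            Fin.succ).det = 0 := by
      intro i
      have h0 : (M.submatrix Fin.succ (Fin.succ 0).succAbove) i.succ 0 = 0 := by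
        rw [Matrix.submatrix_apply]
        show A (b + (i.succ.succ : ℕ)) (b + (((Fin.succ 0 : Fin (m+2)).succAbove 0) : ℕ)) = 0
        rw [hsa 0]
        simp only [Fin.val_succ, Fin.val_zero]
        exact (htri (b + 0) (b + (i + 1 + 1)) (by omega)).2
      rw [h0]; ring
    rw [Finset.sum_eq_zero (fun i _ => htail2 i), add_zero]
    have hE : (M.submatrix Fin.succ (Fin.succ 0).succAbove) 0 0 = A (b+1) b := by
      rw [Matrix.submatrix_apply]
      show A (b + ((Fin.succ 0 : Fin (m+2)) : ℕ)) (b + (((Fin.succ 0 : Fin (m+2)).succAbove 0) : ℕ)) = A (b+1) b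
      rw [hsa 0]
      simp only [Fin.val_succ, Fin.val_zero]
      norm_num
    have hsub : (M.submatrix Fin.succ (Fin.succ 0).succAbove).submatrix
        (Fin.succAbove 0) Fin.succ = Matrix.of fun i j : Fin m => A (b+2+i) (b+2+j) := by
      ext i j
      rw [Fin.succAbove_zero, Matrix.submatrix_apply, Matrix.submatrix_apply]
      show A (b + (i.succ.succ : ℕ)) (b + (((Fin.succ 0 : Fin (m+2)).succAbove j.succ) : ℕ)) = A (b+2+i) (b+2+j)
      rw [hsa j.succ]
      simp only [Fin.val_succ]
      rw [if_neg (by omega)]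
      congr 1 <;> omega
    rw [hE, hsub]
    simp
  rw [hM00, hM01, hmin0, hmin1]
  simp only [Fin.val_zero, Fin.val_succ, pow_zero, pow_one]
  ring


/-- Schmeisser's algorithm (its well-defined run): `f 1 = u`, `f 2 = u'/n`, and
for `ν = 1, ..., n-1`, `f ν = q ν * f (ν+1) - γ ν * f (ν+2)` where each `f ν` is
monic of degree `n + 1 - ν`, each `γ ν > 0` (the leading coefficient of the
remainder `r ν`), and `q n = f n`. The resulting matrix is tridiagonal with
diagonal entries `-(q ν).eval 0` and off-diagonal entries `√(γ ν)`. -/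
theorem stmt17 (n : ℕ) (hn : 2 ≤ n)
    (lam : Fin n → ℝ) (hmono : StrictMono lam)
    (u : Polynomial ℝ) (hu : u = ∏ i : Fin n, (X - C (lam i)))
    (f q : ℕ → Polynomial ℝ) (γ : ℕ → ℝ)
    (hf1 : f 1 = u) (hf2 : f 2 = (n : ℝ)⁻¹ • derivative u)
    (hγ : ∀ ν, 1 ≤ ν → ν ≤ n - 1 → 0 < γ ν)
    (hdiv : ∀ ν, 1 ≤ ν → ν ≤ n - 1 →
      f ν = q ν * f (ν + 1) - C (γ ν) * f (ν + 2))
    (hfm : ∀ ν, 1 ≤ ν → ν ≤ n + 1 → (f ν).Monic ∧ (f ν).natDegree = n + 1 - ν)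
    (hqn : q n = f n)
    (T : Matrix (Fin n) (Fin n) ℝ)
    (hT : T = tridiag n (fun ν => -(q ν).eval 0)
      (fun k => Real.sqrt (γ (k - 1)))) :
    ∀ (W : Matrix (Fin n) (Fin n) ℝ), Wᵀ * W = 1 →
      Wᵀ * T * W = Matrix.diagonal lam →
      ∀ j, |W ⟨0, by omega⟩ j| = 1 / Real.sqrt n := by
  intro W hW hTWeq j
  have hinj : Function.Injective lam := hmono.injective
  set lj := lam j with hlj
  set z : Fin n := ⟨0, by omega⟩ with hz
  set v : Fin n → ℝ := fun k => W k j with hvdef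
  set dj : ℝ := ∏ i ∈ Finset.univ.erase j, (lj - lam i) with hdj
  have hWWT : W * Wᵀ = 1 := mul_eq_one_comm.mp hW
  -- basic facts
  have hv2 : ∑ k, v k * v k = 1 := by
    have h : (Wᵀ * W) j j = (1 : Matrix (Fin n) (Fin n) ℝ) j j := by rw [hW]
    rw [Matrix.mul_apply, Matrix.one_apply_eq] at h
    show ∑ k, W k j * W k j = 1
    simpa [Matrix.transpose_apply] using h
  have hTmulW : T * W = W * Matrix.diagonal lam := by
    calc T * W = (W * Wᵀ) * (T * W) := by rw [hWWT, one_mul]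
      _ = W * (Wᵀ * T * W) := by simp only [Matrix.mul_assoc]
      _ = W * Matrix.diagonal lam := by rw [hTWeq]
  have hTv : ∀ k, ∑ l, T k l * v l = lj * v k := by
    intro k
    have h : (T * W) k j = (W * Matrix.diagonal lam) k j := by rw [hTmulW]
    rw [Matrix.mul_apply, Matrix.mul_diagonal] at h
    show ∑ l, T k l * W l j = lam j * W k j
    rw [h, mul_comm]
  have hDW : Matrix.diagonal lam * Wᵀ = Wᵀ * T := by
    calc Matrix.diagonal lam * Wᵀ = (Wᵀ * T * W) * Wᵀ := by rw [hTWeq]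
      _ = (Wᵀ * T) * (W * Wᵀ) := by simp only [Matrix.mul_assoc]
      _ = Wᵀ * T := by rw [hWWT, mul_one]
  have hdj0 : dj ≠ 0 := by
    rw [hdj, Finset.prod_ne_zero_iff]
    intro i hi
    have hij : i ≠ j := Finset.ne_of_mem_erase hi
    exact sub_ne_zero.mpr (fun h => hij (hinj h.symm))
  -- q is monic of degree 1
  have hqm : ∀ ν, 1 ≤ ν → ν ≤ n → (q ν).Monic ∧ (q ν).natDegree = 1 := by
    intro ν h1 h2
    rcases eq_or_lt_of_le h2 with rfl | hlt
    · rw [hqn]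
      obtain ⟨hm, hd⟩ := hfm ν h1 (by omega)
      exact ⟨hm, by omega⟩
    · have hν : ν ≤ n - 1 := by omega
      obtain ⟨hm1, hd1⟩ := hfm ν h1 (by omega)
      obtain ⟨hm2, hd2⟩ := hfm (ν+1) (by omega) (by omega)
      obtain ⟨hm3, hd3⟩ := hfm (ν+2) (by omega) (by omega)
      have hg : (f ν + C (γ ν) * f (ν + 2)).Monic := by
        apply hm1.add_of_left
        calc (C (γ ν) * f (ν + 2)).degree ≤ (f (ν+2)).degree + 0 := by
              rw [mul_comm]
              exact (Polynomial.degree_mul_le _ _).trans (by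
                gcongr; exact Polynomial.degree_C_le)
          _ < (f ν).degree := by
              rw [add_zero, Polynomial.degree_eq_natDegree hm3.ne_zero,
                Polynomial.degree_eq_natDegree hm1.ne_zero]
              exact_mod_cast (by omega : (f (ν+2)).natDegree < (f ν).natDegree)
      have heq : q ν * f (ν + 1) = f ν + C (γ ν) * f (ν + 2) := by
        rw [hdiv ν h1 hν]; ring
      have hq0 : q ν ≠ 0 := by
        intro h
        rw [h, zero_mul] at heq
        exact hg.ne_zero heq.symm
      have hgd : (f ν + C (γ ν) * f (ν + 2)).natDegree = n + 1 - ν := by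
        rw [Polynomial.natDegree_add_eq_left_of_natDegree_lt, hd1]
        apply lt_of_le_of_lt (Polynomial.natDegree_C_mul_le _ _)
        omega
      constructor
      · have : ((f (ν+1)) * (q ν)).Monic := by rwa [mul_comm, heq]
        exact hm2.of_mul_monic_left this
      · have hnd : (q ν).natDegree + (f (ν+1)).natDegree = n + 1 - ν := by
          rw [← Polynomial.natDegree_mul hq0 hm2.ne_zero, heq, hgd]
        omega
  set AA : ℕ → ℕ → ℝ := fun i j' =>
    if i = j' then lj + (q (i+1)).eval 0
    else if i + 1 = j' then -Real.sqrt (γ j')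
    else if j' + 1 = i then -Real.sqrt (γ i) else 0 with hAA
  have htriAA : ∀ i j : ℕ, i + 1 < j → AA i j = 0 ∧ AA j i = 0 := by
    intro i j h
    constructor <;> · simp only [hAA]; split_ifs <;> first | rfl | omega
  set Mt : Matrix (Fin n) (Fin n) ℝ := Matrix.of fun i j' : Fin n => AA i j' with hMt
  have hMtT : Mt = lj • (1 : Matrix (Fin n) (Fin n) ℝ) - T := by
    rw [hT]
    ext i k
    rw [hMt, Matrix.of_apply]; simp only [hAA]
    simp only [Matrix.sub_apply, Matrix.smul_apply, Matrix.one_apply, tridiag, smul_eq_mul]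
    rcases eq_or_ne (i : ℕ) (k : ℕ) with h | h
    · have : i = k := Fin.ext h
      subst this
      simp
    · have hik : i ≠ k := fun hc => h (by rw [hc])
      rw [if_neg h, if_neg h, if_neg hik, mul_zero, zero_sub]
      rcases eq_or_ne ((i:ℕ) + 1) (k:ℕ) with h2 | h2
      · rw [if_pos h2, if_pos h2]
        simp
      · rw [if_neg h2, if_neg h2]
        rcases eq_or_ne ((k:ℕ) + 1) (i:ℕ) with h3 | h3
        · rw [if_pos h3, if_pos h3]
          simp
        · rw [if_neg h3, if_neg h3, neg_zero]
  have hdet : ∀ m, m ≤ n →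
      (Matrix.of fun i j' : Fin m => AA (n - m + i) (n - m + j')).det =
        (f (n + 1 - m)).eval lj := by
    intro m
    induction m using Nat.strong_induction_on with
    | _ m ih =>
      match m with
      | 0 =>
        intro _
        have h1 : f (n + 1) = 1 := by
          obtain ⟨hm, hd⟩ := hfm (n+1) (by omega) le_rfl
          exact hm.natDegree_eq_zero.mp (by omega)
        simp [Matrix.det_fin_zero, h1]
      | 1 =>
        intro _
        rw [Matrix.det_fin_one]
        have h0 : (Matrix.of fun i j' : Fin 1 => AA (n - 1 + i) (n - 1 + j')) 0 0
            = AA (n-1) (n-1) := by norm_num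
        have hAAbb : AA (n-1) (n-1) = lj + (q (n-1+1)).eval 0 := by simp [hAA]
        rw [h0, hAAbb]
        have hn1 : n - 1 + 1 = n := by omega
        rw [hn1]
        obtain ⟨hm, hd⟩ := hfm n (by omega) (by omega)
        have : n + 1 - 1 = n := by omega
        rw [this, eval_monic_deg_one hm (by omega) lj, hqn]
      | (m+2) =>
        intro hm
        set b := n - (m+2) with hb
        rw [det_tridiag_step AA htriAA b m]
        have e1 : n - (m+1) = b + 1 := by omega
        have e2 : n - m = b + 2 := by omega
        have ih1 := ih (m+1) (by omega) (by omega)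
        have ih2 := ih m (by omega) (by omega)
        rw [e1] at ih1
        rw [e2] at ih2
        rw [ih1, ih2]
        set ν := b + 1 with hν
        have hν1 : 1 ≤ ν := by omega
        have hν2 : ν ≤ n - 1 := by omega
        have hbb : AA b b = (q ν).eval lj := by
          have h' : AA b b = lj + (q (b+1)).eval 0 := by simp [hAA]
          obtain ⟨hqmo, hqd⟩ := hqm ν hν1 (by omega)
          rw [h', eval_monic_deg_one hqmo hqd lj, hν]
        have hb01 : AA b (b+1) = -Real.sqrt (γ ν) := by
          rw [hν]; simp [hAA]
        have hb10 : AA (b+1) b = -Real.sqrt (γ ν) := by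
          rw [hν]; simp [hAA]
          intro h'
          exact absurd h' (by omega)
        rw [hbb, hb01, hb10]
        have hsq : -Real.sqrt (γ ν) * (-Real.sqrt (γ ν)) = γ ν := by
          rw [neg_mul_neg]
          exact Real.mul_self_sqrt (le_of_lt (hγ ν hν1 hν2))
        have egoal : n + 1 - (m+2) = ν := by omega
        have e3 : n + 1 - (m+1) = ν + 1 := by omega
        have e4 : n + 1 - m = ν + 2 := by omega
        rw [egoal, e3, e4, hdiv ν hν1 hν2]
        simp only [Polynomial.eval_sub, Polynomial.eval_mul, Polynomial.eval_C]
        linear_combination (-(eval lj (f (ν + 2)))) * hsq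
  have hAAsym : ∀ i k : ℕ, AA i k = AA k i := by
    intro i k
    simp only [hAA]
    rcases eq_or_ne i k with rfl | h
    · rfl
    · rw [if_neg h, if_neg (Ne.symm h)]
      rcases eq_or_ne (i+1) k with h2 | h2
      · rw [if_pos h2, if_neg (by omega), if_pos h2]
      · rw [if_neg h2]
        rcases eq_or_ne (k+1) i with h3 | h3
        · rw [if_pos h3, if_pos h3]
        · rw [if_neg h3, if_neg h3, if_neg h2]
  have hchar : (Matrix.charmatrix T).det = u := by
    have hTD : T = W * Matrix.diagonal lam * Wᵀ := by
      calc T = (T * W) * Wᵀ := by rw [Matrix.mul_assoc, hWWT, mul_one]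
        _ = W * Matrix.diagonal lam * Wᵀ := by rw [hTmulW]
    set mC : Matrix (Fin n) (Fin n) ℝ →+* Matrix (Fin n) (Fin n) ℝ[X] := (C : ℝ →+* ℝ[X]).mapMatrix with hmC
    have hcd : Matrix.charmatrix (Matrix.diagonal lam) =
        Matrix.diagonal (fun i => X - C (lam i)) := by
      refine Matrix.ext fun i k => ?_
      rcases eq_or_ne i k with rfl | h
      · rw [Matrix.charmatrix_apply_eq, Matrix.diagonal_apply_eq (fun i => X - C (lam i)) i, Matrix.diagonal_apply_eq lam i]
      · rw [Matrix.charmatrix_apply_ne _ _ _ h, Matrix.diagonal_apply_ne _ h,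
          Matrix.diagonal_apply_ne _ h, map_zero, neg_zero]
    have hscal : ∀ M : Matrix (Fin n) (Fin n) ℝ[X],
        Matrix.scalar (Fin n) (X : ℝ[X]) * M = M * Matrix.scalar (Fin n) (X : ℝ[X]) :=
      fun M => (Matrix.scalar_commute (X : ℝ[X]) (fun r' => mul_comm _ _) M).eq
    have h1 : Matrix.charmatrix T = mC W * Matrix.charmatrix (Matrix.diagonal lam) * mC Wᵀ := by
      rw [Matrix.charmatrix, Matrix.charmatrix, hTD]
      rw [Matrix.mul_sub, Matrix.sub_mul]
      congr 1
      · rw [← hscal (mC W), Matrix.mul_assoc, ← _root_.map_mul, hWWT, _root_.map_one, mul_one]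
      · rw [hmC]
        simp only [_root_.map_mul]
    have h2 : (Matrix.charmatrix T).det =
        C (W.det) * (∏ i : Fin n, (X - C (lam i))) * C (Wᵀ.det) := by
      rw [h1, Matrix.det_mul, Matrix.det_mul, hcd, Matrix.det_diagonal, hmC]
      rw [← RingHom.map_det, ← RingHom.map_det]
    have h3 : C (W.det) * C (Wᵀ.det) = 1 := by
      rw [← _root_.map_mul, ← Matrix.det_mul, hWWT, Matrix.det_one, _root_.map_one]
    rw [h2, hu]
    calc C W.det * (∏ i : Fin n, (X - C (lam i))) * C Wᵀ.det
        = (C W.det * C Wᵀ.det) * ∏ i : Fin n, (X - C (lam i)) := by ring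
      _ = ∏ i : Fin n, (X - C (lam i)) := by rw [h3, one_mul]

  set N := Matrix.charmatrix T with hN
  set w' : Fin n → ℝ[X] := fun l => C (v l) with hw'
  have hNw : N *ᵥ w' = (X - C lj) • w' := by
    funext k
    show ∑ l, N k l * w' l = (X - C lj) • w' k
    have hterm : ∀ l, N k l * w' l =
        (Matrix.diagonal (fun _ : Fin n => (X:ℝ[X]))) k l * C (v l) - C (T k l * v l) := by
      intro l
      rw [hN, Matrix.charmatrix_apply, sub_mul, _root_.map_mul]
    rw [Finset.sum_congr rfl (fun l _ => hterm l), Finset.sum_sub_distrib]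
    rw [Finset.sum_eq_single k
      (fun l _ hl => by rw [Matrix.diagonal_apply_ne _ (Ne.symm hl), zero_mul])
      (fun h => absurd (Finset.mem_univ k) h)]
    rw [Matrix.diagonal_apply_eq, ← map_sum, hTv k, _root_.map_mul]
    show X * C (v k) - C lj * C (v k) = (X - C lj) * C (v k)
    ring
  have hadjN : ∀ k, (Matrix.adjugate N *ᵥ w') k =
      (∏ i ∈ Finset.univ.erase j, (X - C (lam i))) * C (v k) := by
    have h1 : Matrix.adjugate N *ᵥ (N *ᵥ w') = u • w' := by
      rw [Matrix.mulVec_mulVec, Matrix.adjugate_mul, hchar, Matrix.smul_mulVec,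
        Matrix.one_mulVec]
    rw [hNw, Matrix.mulVec_smul] at h1
    intro k
    have hufact : u = (X - C lj) * ∏ i ∈ Finset.univ.erase j, (X - C (lam i)) := by
      rw [hu, ← Finset.mul_prod_erase Finset.univ _ (Finset.mem_univ j)]
    have h3 := congrFun h1 k
    simp only [Pi.smul_apply, smul_eq_mul] at h3
    have h2 : (X - C lj) * (Matrix.adjugate N *ᵥ w') k =
        (X - C lj) * ((∏ i ∈ Finset.univ.erase j, (X - C (lam i))) * C (v k)) := by
      rw [h3, hufact, mul_assoc]
    exact mul_left_cancel₀ (Polynomial.X_sub_C_ne_zero lj) h2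
  have hmapN : (Polynomial.evalRingHom lj).mapMatrix N = Mt := by
    refine Matrix.ext fun i k => ?_
    rw [hMtT]
    simp only [RingHom.mapMatrix_apply, Matrix.map_apply, hN, Matrix.charmatrix_apply,
      coe_evalRingHom, Matrix.sub_apply, Matrix.smul_apply, Matrix.one_apply, smul_eq_mul]
    rcases eq_or_ne i k with rfl | h
    · simp
    · simp [Matrix.diagonal_apply_ne _ h, h]
  have hadjMt : ∀ k l, Matrix.adjugate Mt k l = Polynomial.eval lj (Matrix.adjugate N k l) := by
    intro k l
    rw [← hmapN, ← RingHom.map_adjugate]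
    rfl
  have hadjv : ∀ k, ∑ l, Matrix.adjugate Mt k l * v l = dj * v k := by
    intro k
    have h4 := congrArg (Polynomial.eval lj) (hadjN k)
    have h5 : (Matrix.adjugate N *ᵥ w') k = ∑ l, Matrix.adjugate N k l * C (v l) := rfl
    rw [h5] at h4
    rw [Polynomial.eval_finset_sum] at h4
    simp only [Polynomial.eval_mul, Polynomial.eval_C] at h4
    rw [Polynomial.eval_prod] at h4
    simp only [Polynomial.eval_sub, Polynomial.eval_X, Polynomial.eval_C] at h4
    calc ∑ l, Matrix.adjugate Mt k l * v l
        = ∑ l, Polynomial.eval lj (Matrix.adjugate N k l) * v l := by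
          exact Finset.sum_congr rfl fun l _ => by rw [hadjMt]
      _ = dj * v k := h4
  have hdetMt : Mt.det = 0 := by
    have h6 : Mt.det = Polynomial.eval lj u := by
      rw [← hmapN, ← RingHom.map_det, hN, hchar]
      rfl
    rw [h6, hu, Polynomial.eval_prod]
    exact Finset.prod_eq_zero (Finset.mem_univ j) (by simp [hlj])
  have hMadj : Mt * Matrix.adjugate Mt = 0 := by
    rw [Matrix.mul_adjugate, hdetMt, zero_smul]
  have hker : ∀ w : Fin n → ℝ, (∀ k, ∑ l, Mt k l * w l = 0) →
      ∀ k, w k = (∑ l, W l j * w l) * v k := by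
    intro w hw k
    have hMw : Mt *ᵥ w = 0 := funext hw
    have hTw : T *ᵥ w = lj • w := by
      rw [hMtT] at hMw
      rw [Matrix.sub_mulVec, Matrix.smul_mulVec, Matrix.one_mulVec, sub_eq_zero] at hMw
      exact hMw.symm
    set y : Fin n → ℝ := Wᵀ *ᵥ w with hy
    have hDy : Matrix.diagonal lam *ᵥ y = lj • y := by
      rw [hy, Matrix.mulVec_mulVec, hDW, ← Matrix.mulVec_mulVec, hTw, Matrix.mulVec_smul]
    have hyi : ∀ i, i ≠ j → y i = 0 := by
      intro i hi
      have h7 := congrFun hDy i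
      rw [Matrix.mulVec_diagonal] at h7
      have h8 : (lam i - lj) * y i = 0 := by
        simp only [Pi.smul_apply, smul_eq_mul] at h7
        linear_combination h7
      rcases mul_eq_zero.mp h8 with h9 | h9
      · exact absurd (sub_eq_zero.mp h9) (fun hc => hi (hinj hc))
      · exact h9
    have hwWy : w = W *ᵥ y := by
      rw [hy, Matrix.mulVec_mulVec, hWWT, Matrix.one_mulVec]
    have hyj : y j = ∑ l, W l j * w l := by
      show (Wᵀ *ᵥ w) j = _
      show ∑ l, Wᵀ j l * w l = _
      rfl
    have hwk : w k = W k j * y j := by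
      conv_lhs => rw [hwWy]
      show ∑ i, W k i * y i = W k j * y j
      exact Finset.sum_eq_single j (fun i _ hi => by rw [hyi i hi, mul_zero])
        (fun h => absurd (Finset.mem_univ j) h)
    rw [hwk, ← hyj, mul_comm]
  set c : Fin n → ℝ := fun i => ∑ l, W l j * Matrix.adjugate Mt l i with hc
  have hcol : ∀ i k, Matrix.adjugate Mt k i = c i * v k := by
    intro i k
    exact hker (fun k' => Matrix.adjugate Mt k' i)
      (fun k' => by rw [← Matrix.mul_apply, hMadj]; rfl) k
  have hMts : Mtᵀ = Mt := by
    rw [hMt]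
    exact Matrix.ext fun i k => hAAsym k i
  have hsym : ∀ i k, Matrix.adjugate Mt k i = Matrix.adjugate Mt i k := by
    intro i k
    have : Matrix.adjugate Mt k i = (Matrix.adjugate Mt)ᵀ i k := rfl
    rw [this, Matrix.adjugate_transpose, hMts]
  have hcz : c z = dj * v z := by
    calc c z = c z * 1 := (mul_one _).symm
      _ = c z * ∑ l, v l * v l := by rw [hv2]
      _ = ∑ l, (c z * v l) * v l := by rw [Finset.mul_sum]; exact Finset.sum_congr rfl fun l _ => by ring
      _ = ∑ l, Matrix.adjugate Mt l z * v l := Finset.sum_congr rfl fun l _ => by rw [hcol z l]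
      _ = ∑ l, Matrix.adjugate Mt z l * v l := Finset.sum_congr rfl fun l _ => by rw [hsym l z]
      _ = dj * v z := hadjv z
  have hadj_zz : Matrix.adjugate Mt z z = dj * (v z * v z) := by
    rw [hcol z z, hcz, mul_assoc]
  -- minor determinant
  have hne : n - 1 + 1 = n := by omega
  have hsub : Mt.submatrix (finCongr hne) (finCongr hne) =
      Matrix.of fun i k : Fin (n-1+1) => AA i k := by
    refine Matrix.ext fun i k => ?_
    rw [Matrix.submatrix_apply, hMt]
    show AA ((finCongr hne i) : ℕ) ((finCongr hne k) : ℕ) = AA i k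
    congr 1 <;> simp
  have hminor : Matrix.adjugate Mt z z = (f 2).eval lj := by
    have h1 : Matrix.adjugate Mt z z =
        Matrix.adjugate (Mt.submatrix (finCongr hne) (finCongr hne)) 0 0 := by
      rw [Matrix.adjugate_submatrix_equiv_self]
      rw [Matrix.submatrix_apply]
      congr 1 <;> exact Fin.ext (by simp [hz])
    rw [h1, hsub, adj_zero_zero AA (n-1)]
    have h2 := hdet (n-1) (by omega)
    have e5 : n - (n-1) = 1 := by omega
    have e6 : n + 1 - (n-1) = 2 := by omega
    rw [e5, e6] at h2
    exact h2
  have hf2e : (f 2).eval lj = dj / n := by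
    rw [hf2]
    simp only [Polynomial.eval_smul, smul_eq_mul]
    rw [hu, eval_deriv_prod lam j]
    rw [div_eq_inv_mul, hdj]
  have hn0 : (0:ℝ) < n := by positivity
  have hsq : v z ^ 2 = 1 / n := by
    have h1 : dj * (v z * v z) = dj / n := by
      rw [← hadj_zz, hminor, hf2e]
    have h2 : v z * v z = 1 / n := by
      field_simp at h1 ⊢
      linear_combination h1
    rw [pow_two]; exact h2
  calc |W z j| = Real.sqrt (v z ^ 2) := (Real.sqrt_sq_eq_abs _).symm
    _ = Real.sqrt (1/n) := by rw [hsq]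
    _ = 1 / Real.sqrt n := by rw [one_div, one_div, Real.sqrt_inv]
end
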